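/- arXiv:1912.06504 — 5 statements merged into one kernel-verified Lean document; each statement's English description precedes it below -/
import Mathlib

section
/- Let Λ(w,η) = e^w · Γ(w+η) / (√(2π) · exp((w+η-1/2)·Log w)), where Γ is the complex Gamma function and Log is the principal branch of the logarithm on ℂ ∖ ℝ_{≤0}. Then for all w ∈ ℂ with Im(w) > 0 and all η ∈ ℂ with w+η ∉ ℤ, one has Λ(w,η)·Λ(-w,1-η) = (1 - e^{2πi(w+η)})^{-1}. -/
open Complex

/-- The normalized Gamma-type function `Λ(w,η)` of Barbieri's solution to the
Riemann–Hilbert problem, defined using the principal branch of the logarithm. -/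
noncomputable def Lam (w η : ℂ) : ℂ :=
  Complex.exp w * Complex.Gamma (w + η) /
    ((Real.sqrt (2 * Real.pi) : ℂ) * Complex.exp ((w + η - 1 / 2) * Complex.log w))

theorem Lam_reflection_upper (w η : ℂ) (hw : 0 < w.im) (hn : ∀ n : ℤ, w + η ≠ (n : ℂ)) :
    Lam w η * Lam (-w) (1 - η) =
      (1 - Complex.exp (2 * (Real.pi : ℂ) * Complex.I * (w + η)))⁻¹ := by
  set z : ℂ := w + η with hz
  have hπ : (Real.pi : ℂ) ≠ 0 := by
    exact_mod_cast Real.pi_ne_zero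
  -- sin (π z) ≠ 0
  have hsin : Complex.sin ((Real.pi : ℂ) * z) ≠ 0 := by
    rw [Complex.sin_ne_zero_iff]
    intro k hk
    apply hn k
    have h : (Real.pi : ℂ) * z = (Real.pi : ℂ) * (k : ℂ) := by rw [hk]; ring
    exact mul_left_cancel₀ hπ h
  -- log (-w) = log w - π I
  have hw0 : w ≠ 0 := by
    intro h
    rw [h] at hw
    simp at hw
  have hlog : Complex.log (-w) = Complex.log w - (Real.pi : ℂ) * I := by
    rw [Complex.log, Complex.log, norm_neg, arg_neg_eq_arg_sub_pi_of_im_pos hw]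
    push_cast
    ring
  -- exp (-(π/2) I) = -I
  have hexpI : Complex.exp (-((Real.pi : ℂ) / 2 * I)) = -I := by
    rw [show -((Real.pi : ℂ) / 2 * I) = -((Real.pi : ℂ) / 2) * I by ring,
      ← Complex.log_neg_I]
    exact Complex.exp_log (by simp)
  -- product of the two exponential denominators
  have hεprod : Complex.exp ((z - 1 / 2) * Complex.log w) *
      Complex.exp ((-w + (1 - η) - 1 / 2) * Complex.log (-w)) =
      -I * Complex.exp ((Real.pi : ℂ) * I * z) := by
    rw [← Complex.exp_add, hlog]
    have : (z - 1 / 2) * Complex.log w + (-w + (1 - η) - 1 / 2) *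
        (Complex.log w - (Real.pi : ℂ) * I) =
        (Real.pi : ℂ) * I * z + -((Real.pi : ℂ) / 2 * I) := by
      rw [hz]; ring
    rw [this, Complex.exp_add, hexpI]
    ring
  -- the right-hand side denominator
  have hrhs : 1 - Complex.exp (2 * (Real.pi : ℂ) * I * z) =
      -2 * I * Complex.sin ((Real.pi : ℂ) * z) * Complex.exp ((Real.pi : ℂ) * I * z) := by
    rw [Complex.sin]
    have h1 : Complex.exp (-((Real.pi : ℂ) * z) * I) * Complex.exp (((Real.pi : ℂ) * z) * I)
        = 1 := by
      rw [← Complex.exp_add]; simp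
    have h2 : Complex.exp (2 * (Real.pi : ℂ) * I * z) =
        Complex.exp (((Real.pi : ℂ) * z) * I) * Complex.exp (((Real.pi : ℂ) * z) * I) := by
      rw [← Complex.exp_add]; ring_nf
    have h3 : Complex.exp ((Real.pi : ℂ) * I * z) = Complex.exp (((Real.pi : ℂ) * z) * I) := by
      ring_nf
    have h4 : Complex.I ^ 2 = -1 := Complex.I_sq
    rw [h2, h3]
    linear_combination ((Complex.exp (-((Real.pi : ℂ) * z) * I) -
      Complex.exp (((Real.pi : ℂ) * z) * I)) * Complex.exp (((Real.pi : ℂ) * z) * I)) * h4 - h1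
  -- now unfold Lam and compute
  have hsqrt : ((Real.sqrt (2 * Real.pi) : ℝ) : ℂ) ≠ 0 :=
    Complex.ofReal_ne_zero.mpr (Real.sqrt_ne_zero'.mpr (by positivity))
  have hsq : ((Real.sqrt (2 * Real.pi) : ℝ) : ℂ) * ((Real.sqrt (2 * Real.pi) : ℝ) : ℂ)
      = 2 * (Real.pi : ℂ) := by
    rw [← Complex.ofReal_mul, Real.mul_self_sqrt (by positivity)]
    push_cast; ring
  have hE : Complex.exp ((Real.pi : ℂ) * I * z) ≠ 0 := Complex.exp_ne_zero _
  have hrefl : Complex.Gamma z * Complex.Gamma (1 - z) =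
      (Real.pi : ℂ) / Complex.sin ((Real.pi : ℂ) * z) := Complex.Gamma_mul_Gamma_one_sub z
  rw [Lam, Lam, hrhs]
  have harg : -w + (1 - η) = 1 - z := by rw [hz]; ring
  rw [harg] at hεprod ⊢
  rw [show w + η - 1 / 2 = z - 1 / 2 from by rw [hz]]
  rw [div_mul_div_comm]
  have hnum : Complex.exp w * Complex.Gamma z * (Complex.exp (-w) * Complex.Gamma (1 - z)) =
      (Real.pi : ℂ) / Complex.sin ((Real.pi : ℂ) * z) := by
    rw [show Complex.exp w * Complex.Gamma z * (Complex.exp (-w) * Complex.Gamma (1 - z)) =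
      (Complex.exp w * Complex.exp (-w)) * (Complex.Gamma z * Complex.Gamma (1 - z)) by ring,
      ← Complex.exp_add, hrefl]
    simp
  rw [hnum]
  rw [show ((Real.sqrt (2 * Real.pi) : ℝ) : ℂ) * Complex.exp ((z - 1 / 2) * Complex.log w) *
      (((Real.sqrt (2 * Real.pi) : ℝ) : ℂ) * Complex.exp ((1 - z - 1 / 2) * Complex.log (-w))) =
      (((Real.sqrt (2 * Real.pi) : ℝ) : ℂ) * ((Real.sqrt (2 * Real.pi) : ℝ) : ℂ)) *
      (Complex.exp ((z - 1 / 2) * Complex.log w) *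
        Complex.exp ((1 - z - 1 / 2) * Complex.log (-w))) by ring,
    hεprod, hsq]
  field_simp
end

section
/- Similarly, for all w ∈ ℂ with Im(w) < 0 and all η ∈ ℂ with w+η ∉ ℤ, one has Λ(w,η)·Λ(-w,1-η) = (1 - e^{-2πi(w+η)})^{-1}, where Λ(w,η) = e^w · Γ(w+η) / (√(2π) · exp((w+η-1/2)·Log w)) and Log is the principal logarithm. -/
open Complex

theorem Lam_reflection_lower (w η : ℂ) (hw : w.im < 0) (hn : ∀ n : ℤ, w + η ≠ (n : ℂ)) :
    Lam w η * Lam (-w) (1 - η) =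
      (1 - Complex.exp (-(2 * (Real.pi : ℂ) * Complex.I * (w + η))))⁻¹ := by
  have hπ : (Real.pi : ℂ) ≠ 0 := ofReal_ne_zero.mpr Real.pi_ne_zero
  have hlog : Complex.log (-w) = Complex.log w + Real.pi * I := by
    rw [Complex.log, Complex.log, norm_neg,
      Complex.arg_neg_eq_arg_add_pi_of_im_neg hw]
    push_cast
    ring
  have hs : Complex.sin ((Real.pi : ℂ) * (w + η)) ≠ 0 := by
    intro h
    rw [Complex.sin_eq_zero_iff] at h
    obtain ⟨k, hk⟩ := h
    refine hn k (mul_left_cancel₀ hπ ?_)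
    rw [hk]; ring
  have hΓ := Complex.Gamma_mul_Gamma_one_sub (w + η)
  have hIhalf : Complex.exp ((Real.pi : ℂ) * I / 2) = I := by
    rw [show ((Real.pi : ℂ) * I / 2) = (↑(Real.pi / 2) : ℂ) * I by push_cast; ring,
      Complex.exp_mul_I]
    rw [← Complex.ofReal_cos, ← Complex.ofReal_sin, Real.cos_pi_div_two, Real.sin_pi_div_two]
    simp
  have h2π : ((Real.sqrt (2 * Real.pi) : ℝ) : ℂ) * ((Real.sqrt (2 * Real.pi) : ℝ) : ℂ)
      = 2 * (Real.pi : ℂ) := by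
    rw [← Complex.ofReal_mul, Real.mul_self_sqrt (by positivity)]
    push_cast; ring
  set z := w + η with hzdef
  set E := Complex.exp (-((Real.pi : ℂ) * I * z)) with hE
  have hfact : 1 - Complex.exp (-(2 * (Real.pi : ℂ) * I * z))
      = E * (2 * I) * Complex.sin ((Real.pi : ℂ) * z) := by
    rw [Complex.sin]
    have e1 : E * Complex.exp (-((Real.pi : ℂ) * z) * I)
        = Complex.exp (-(2 * (Real.pi : ℂ) * I * z)) := by
      rw [hE, ← Complex.exp_add]; congr 1; ring
    have e2 : E * Complex.exp ((Real.pi : ℂ) * z * I) = 1 := by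
      rw [hE, ← Complex.exp_add,
        show -((Real.pi : ℂ) * I * z) + (Real.pi : ℂ) * z * I = 0 by ring, Complex.exp_zero]
    linear_combination e1 - e2 + (E * Complex.exp ((Real.pi : ℂ) * z * I)
      - E * Complex.exp (-((Real.pi : ℂ) * z) * I)) * Complex.I_mul_I
  have hEne : E ≠ 0 := Complex.exp_ne_zero _
  have hone : 1 - Complex.exp (-(2 * (Real.pi : ℂ) * I * z)) ≠ 0 := by
    rw [hfact]
    exact mul_ne_zero (mul_ne_zero hEne (by simp [Complex.I_ne_zero])) hs
  unfold Lam
  rw [show -w + (1 - η) = 1 - z by rw [hzdef]; ring, ← hzdef, hlog]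
  have hnum : Complex.exp w * Complex.Gamma z * (Complex.exp (-w) * Complex.Gamma (1 - z))
      = (Real.pi : ℂ) / Complex.sin ((Real.pi : ℂ) * z) := by
    rw [show Complex.exp w * Complex.Gamma z * (Complex.exp (-w) * Complex.Gamma (1 - z))
        = (Complex.exp w * Complex.exp (-w)) * (Complex.Gamma z * Complex.Gamma (1 - z)) by ring,
      ← Complex.exp_add, add_neg_cancel, Complex.exp_zero, one_mul, hΓ]
  have hden : ((Real.sqrt (2 * Real.pi) : ℝ) : ℂ) * Complex.exp ((z - 1 / 2) * Complex.log w) *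
      (((Real.sqrt (2 * Real.pi) : ℝ) : ℂ) *
        Complex.exp ((1 - z - 1 / 2) * (Complex.log w + (Real.pi : ℂ) * I)))
      = 2 * (Real.pi : ℂ) * (I * E) := by
    rw [show ((Real.sqrt (2 * Real.pi) : ℝ) : ℂ) * Complex.exp ((z - 1 / 2) * Complex.log w) *
        (((Real.sqrt (2 * Real.pi) : ℝ) : ℂ) *
          Complex.exp ((1 - z - 1 / 2) * (Complex.log w + (Real.pi : ℂ) * I)))
        = (((Real.sqrt (2 * Real.pi) : ℝ) : ℂ) * ((Real.sqrt (2 * Real.pi) : ℝ) : ℂ)) *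
          (Complex.exp ((z - 1 / 2) * Complex.log w) *
            Complex.exp ((1 - z - 1 / 2) * (Complex.log w + (Real.pi : ℂ) * I))) by ring,
      h2π, ← Complex.exp_add,
      show (z - 1 / 2) * Complex.log w + (1 - z - 1 / 2) * (Complex.log w + (Real.pi : ℂ) * I)
        = (Real.pi : ℂ) * I / 2 + -((Real.pi : ℂ) * I * z) by ring,
      Complex.exp_add, hIhalf, ← hE]
  rw [div_mul_div_comm, hnum, hden, hfact]
  rw [eq_comm, inv_eq_iff_eq_inv, eq_comm, inv_div]
  field_simp
end

section
/- Let U ⊆ ℂⁿ × ℂⁿ be open, J : U → ℂ holomorphic (or smooth), and η = (η_{jk}) a constant antisymmetric n×n matrix. Suppose J satisfies the Joyce PDE: ∂²J/∂θ_i∂z_j - ∂²J/∂θ_j∂z_i = ∑_{p,q} η_{pq}(∂²J/∂θ_i∂θ_p)(∂²J/∂θ_j∂θ_q) for all i,j, where (z,θ) are the coordinates on ℂⁿ×ℂⁿ. Define for each ℏ ∈ ℂ* the vector fields X_i^{(ℏ)} = ∂/∂z_i + ℏ^{-1}∂/∂θ_i + ∑_{j,k} η_{jk}(∂²J/∂θ_i∂θ_j)·∂/∂θ_k.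 Then for all i₁, i₂ and all ℏ ∈ ℂ*, the Lie bracket [X_{i₁}^{(ℏ)}, X_{i₂}^{(ℏ)}] vanishes on U. -/
/-- Partial derivative of a function of `n` complex variables in the `i`-th coordinate. -/
noncomputable def pd {n : ℕ} (i : Fin n) (g : (Fin n → ℂ) → ℂ) : (Fin n → ℂ) → ℂ :=
  fun x => deriv (fun t => g (Function.update x i t)) (x i)

/-- The first-order differential operator given by the vector field
`X_i^{(ℏ)} = ∂/∂z_i + ℏ⁻¹ ∂/∂θ_i + ∑_{j,k} η_{jk} (∂²J/∂θ_i∂θ_j) ∂/∂θ_k`,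
acting on a function `F(z,θ)`. -/
noncomputable def vecField {n : ℕ} (η : Fin n → Fin n → ℂ)
    (J : (Fin n → ℂ) → (Fin n → ℂ) → ℂ) (ℏ : ℂ) (i : Fin n)
    (F : (Fin n → ℂ) → (Fin n → ℂ) → ℂ) : (Fin n → ℂ) → (Fin n → ℂ) → ℂ :=
  fun z θ => pd i (fun z' => F z' θ) z + ℏ⁻¹ * pd i (F z) θ +
    ∑ j, ∑ k, η j k * pd j (pd i (J z)) θ * pd k (F z) θ

/-- The `θ_m`-coefficient of the vector field `X_i^{(ℏ)}`. -/
noncomputable def thetaCoef {n : ℕ} (η : Fin n → Fin n → ℂ)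
    (J : (Fin n → ℂ) → (Fin n → ℂ) → ℂ) (ℏ : ℂ) (i m : Fin n) :
    (Fin n → ℂ) → (Fin n → ℂ) → ℂ :=
  fun z θ => (if i = m then ℏ⁻¹ else 0) + ∑ j, η j m * pd j (pd i (J z)) θ

/-- The `z_m`-coefficient of the vector field `X_i^{(ℏ)}` (a constant). -/
noncomputable def zCoef {n : ℕ} (ℏ : ℂ) (i m : Fin n) :
    (Fin n → ℂ) → (Fin n → ℂ) → ℂ :=
  fun _ _ => if i = m then 1 else 0

set_option linter.unusedSectionVars false

section JoyceAux

variable {n : ℕ}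

abbrev EE (n : ℕ) := ((Fin n → ℂ) × (Fin n → ℂ))

/-- unit vector in the `z`-directions -/
noncomputable def ezv (a : Fin n) : EE n := (Pi.single a 1, 0)
/-- unit vector in the `θ`-directions -/
noncomputable def etv (a : Fin n) : EE n := (0, Pi.single a 1)

lemma pd_hasFDerivAt {g : (Fin n → ℂ) → ℂ} {L : (Fin n → ℂ) →L[ℂ] ℂ}
    {x : Fin n → ℂ} (h : HasFDerivAt g L x) (i : Fin n) :
    pd i g x = L (Pi.single i 1) := by
  have hupd : ∀ t : ℂ, Function.update x i t = x + (t - x i) • (Pi.single i 1 : Fin n → ℂ) := by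
    intro t; funext j
    rcases eq_or_ne j i with rfl | hj
    · simp
    · simp [Function.update_of_ne hj, Pi.single_eq_of_ne hj]
  have hc : HasDerivAt (fun t : ℂ => x + (t - x i) • (Pi.single i 1 : Fin n → ℂ))
      ((Pi.single i 1 : Fin n → ℂ)) (x i) := by
    have h1 : HasDerivAt (fun t : ℂ => t - x i) 1 (x i) := (hasDerivAt_id _).sub_const _
    simpa using (h1.smul_const ((Pi.single i 1 : Fin n → ℂ))).const_add x
  have h0 : x + ((x i) - x i) • (Pi.single i 1 : Fin n → ℂ) = x := by simp
  have hD : HasDerivAt (fun t : ℂ => g (x + (t - x i) • (Pi.single i 1 : Fin n → ℂ)))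
      (L (Pi.single i 1)) (x i) :=
    HasFDerivAt.comp_hasDerivAt (x i) (by rw [h0]; exact h) hc
  have hfun : (fun t : ℂ => g (Function.update x i t))
      = fun t : ℂ => g (x + (t - x i) • (Pi.single i 1 : Fin n → ℂ)) := by
    funext t; rw [hupd]
  rw [pd, hfun, hD.deriv]

lemma pd_congr_nhds {f g : (Fin n → ℂ) → ℂ} {x : Fin n → ℂ}
    (h : f =ᶠ[nhds x] g) (i : Fin n) : pd i f x = pd i g x := by
  have hcont : Continuous (fun t : ℂ => Function.update x i t) := by
    apply continuous_pi
    intro j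
    rcases eq_or_ne j i with rfl | hj
    · simpa using continuous_id'
    · simpa [Function.update_of_ne hj] using (continuous_const : Continuous fun _ : ℂ => x j)
  have htend : Filter.Tendsto (fun t : ℂ => Function.update x i t) (nhds (x i)) (nhds x) := by
    have := hcont.continuousAt (x := x i)
    rwa [ContinuousAt, Function.update_eq_self] at this
  exact Filter.EventuallyEq.deriv_eq (h.comp_tendsto htend)

lemma pd_fst {F : EE n → ℂ} {L : EE n →L[ℂ] ℂ} {p : EE n}
    (h : HasFDerivAt F L p) (i : Fin n) :
    pd i (fun z' => F (z', p.2)) p.1 = L (ezv i) := by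
  have hm : HasFDerivAt (fun z' : Fin n → ℂ => (z', p.2))
      (ContinuousLinearMap.inl ℂ (Fin n → ℂ) (Fin n → ℂ)) p.1 :=
    HasFDerivAt.prodMk (hasFDerivAt_id p.1) (hasFDerivAt_const p.2 p.1)
  have hs : HasFDerivAt (fun z' => F (z', p.2))
      (L.comp (ContinuousLinearMap.inl ℂ _ _)) p.1 :=
    (h.congr_fderiv rfl : HasFDerivAt F L (p.1, p.2)).comp p.1 hm
  rw [pd_hasFDerivAt hs i]; simp [ezv]

lemma pd_snd {F : EE n → ℂ} {L : EE n →L[ℂ] ℂ} {p : EE n}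
    (h : HasFDerivAt F L p) (i : Fin n) :
    pd i (fun θ' => F (p.1, θ')) p.2 = L (etv i) := by
  have hm : HasFDerivAt (fun θ' : Fin n → ℂ => (p.1, θ'))
      (ContinuousLinearMap.inr ℂ (Fin n → ℂ) (Fin n → ℂ)) p.2 :=
    HasFDerivAt.prodMk (hasFDerivAt_const p.1 p.2) (hasFDerivAt_id p.2)
  have hs : HasFDerivAt (fun θ' => F (p.1, θ'))
      (L.comp (ContinuousLinearMap.inr ℂ _ _)) p.2 :=
    (h.congr_fderiv rfl : HasFDerivAt F L (p.1, p.2)).comp p.2 hm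
  rw [pd_hasFDerivAt hs i]; simp [etv]

noncomputable def JF1 (J : (Fin n → ℂ) → (Fin n → ℂ) → ℂ) : EE n → (EE n →L[ℂ] ℂ) :=
  fderiv ℂ (fun p : EE n => J p.1 p.2)
noncomputable def JF2 (J : (Fin n → ℂ) → (Fin n → ℂ) → ℂ) := fderiv ℂ (JF1 J)
noncomputable def JF3 (J : (Fin n → ℂ) → (Fin n → ℂ) → ℂ) := fderiv ℂ (JF2 J)

variable {U : Set (EE n)} (hU : IsOpen U) {J : (Fin n → ℂ) → (Fin n → ℂ) → ℂ}
  (hsm : ContDiffOn ℂ ⊤ (fun p : EE n => J p.1 p.2) U) {p : EE n} (hp : p ∈ U)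

include hU hsm hp

lemma cdF0 : ContDiffAt ℂ ⊤ (fun p : EE n => J p.1 p.2) p := hsm.contDiffAt (hU.mem_nhds hp)

lemma cdF1 : ContDiffAt ℂ ⊤ (JF1 J) p := (cdF0 hU hsm hp).fderiv_right le_top

lemma cdF2 : ContDiffAt ℂ ⊤ (JF2 J) p := (cdF1 hU hsm hp).fderiv_right le_top

lemma hasF1 : HasFDerivAt (fun p : EE n => J p.1 p.2) (JF1 J p) p :=
  ((cdF0 hU hsm hp).differentiableAt (by simp)).hasFDerivAt

lemma hasF2 : HasFDerivAt (JF1 J) (JF2 J p) p :=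
  ((cdF1 hU hsm hp).differentiableAt (by simp)).hasFDerivAt

lemma hasF3 : HasFDerivAt (JF2 J) (JF3 J p) p :=
  ((cdF2 hU hsm hp).differentiableAt (by simp)).hasFDerivAt

lemma hasF1app (v : EE n) :
    HasFDerivAt (fun q => JF1 J q v) ((JF2 J p).flip v) p := by
  have := (hasF2 hU hsm hp).clm_apply (hasFDerivAt_const v p)
  simpa using this

lemma hasF2app (v w : EE n) :
    HasFDerivAt (fun q => JF2 J q v w) (((JF3 J p).flip v).flip w) p := by
  have h1 : HasFDerivAt (fun q => JF2 J q v) ((JF3 J p).flip v) p := by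
    have := (hasF3 hU hsm hp).clm_apply (hasFDerivAt_const v p)
    simpa using this
  have := h1.clm_apply (hasFDerivAt_const w p)
  simpa using this

lemma sym2 (v w : EE n) : JF2 J p v w = JF2 J p w v := by
  refine second_derivative_symmetric_of_eventually
    (f := fun p : EE n => J p.1 p.2) ?_ (hasF2 hU hsm hp) v w
  filter_upwards [hU.mem_nhds hp] with q hq using hasF1 hU hsm hq

lemma sym3a (u v w : EE n) : JF3 J p u v w = JF3 J p v u w := by
  have h : JF3 J p u v = JF3 J p v u := by
    refine second_derivative_symmetric_of_eventually
      (f := JF1 J) ?_ (hasF3 hU hsm hp) u v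
    filter_upwards [hU.mem_nhds hp] with q hq using hasF2 hU hsm hq
  rw [h]

lemma fderiv_F2app (u v w : EE n) :
    fderiv ℂ (fun q => JF2 J q v w) p u = JF3 J p u v w := by
  rw [(hasF2app hU hsm hp v w).fderiv]; simp

lemma sym3c (u v w : EE n) : JF3 J p u v w = JF3 J p u w v := by
  rw [← fderiv_F2app hU hsm hp u v w, ← fderiv_F2app hU hsm hp u w v]
  congr 1
  apply Filter.EventuallyEq.fderiv_eq
  filter_upwards [hU.mem_nhds hp] with q hq using sym2 hU hsm hq v w

end JoyceAux
section JoyceAux2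

variable {n : ℕ} {U : Set (EE n)} (hU : IsOpen U) {J : (Fin n → ℂ) → (Fin n → ℂ) → ℂ}
  (hsm : ContDiffOn ℂ ⊤ (fun p : EE n => J p.1 p.2) U) {p : EE n} (hp : p ∈ U)

include hU hsm hp

/-- slice in θ of the open set U is a θ-neighbourhood -/
lemma sliceθ_mem : {θ' | (p.1, θ') ∈ U} ∈ nhds p.2 := by
  have : IsOpen {θ' | (p.1, θ') ∈ U} := hU.preimage (Continuous.prodMk_right p.1)
  exact this.mem_nhds hp

lemma slicez_mem : {z' | (z', p.2) ∈ U} ∈ nhds p.1 := by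
  have : IsOpen {z' | (z', p.2) ∈ U} :=
    hU.preimage ((continuous_id).prodMk continuous_const)
  exact this.mem_nhds hp

/-- first θ-derivative as JF1 -/
lemma R0 (i : Fin n) : pd i (J p.1) p.2 = JF1 J p (etv i) := by
  have h := pd_snd (hasF1 hU hsm hp) i
  exact h

/-- second θθ-derivative -/
lemma R1 (i j : Fin n) : pd j (pd i (J p.1)) p.2 = JF2 J p (etv j) (etv i) := by
  have hev : pd i (J p.1) =ᶠ[nhds p.2] fun θ' => JF1 J (p.1, θ') (etv i) := by
    filter_upwards [sliceθ_mem hU hsm hp] with θ' hθ'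
    exact R0 hU hsm hθ' i
  rw [pd_congr_nhds hev j]
  have h := pd_snd (hasF1app hU hsm hp (etv i)) j
  simpa using h

/-- mixed z-θ second derivative -/
lemma R2 (i j : Fin n) :
    pd j (fun z' => pd i (J z') p.2) p.1 = JF2 J p (ezv j) (etv i) := by
  have hev : (fun z' => pd i (J z') p.2) =ᶠ[nhds p.1]
      fun z' => JF1 J (z', p.2) (etv i) := by
    filter_upwards [slicez_mem hU hsm hp] with z' hz'
    exact R0 hU hsm hz' i
  rw [pd_congr_nhds hev j]
  have h := pd_fst (hasF1app hU hsm hp (etv i)) j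
  simpa using h

/-- θ-derivative of an applied second derivative -/
lemma R3θ (a : Fin n) (v w : EE n) :
    pd a (fun θ' => JF2 J (p.1, θ') v w) p.2 = JF3 J p (etv a) v w := by
  have h := pd_snd (hasF2app hU hsm hp v w) a
  simpa using h

/-- z-derivative of an applied second derivative -/
lemma R3z (a : Fin n) (v w : EE n) :
    pd a (fun z' => JF2 J (z', p.2) v w) p.1 = JF3 J p (ezv a) v w := by
  have h := pd_fst (hasF2app hU hsm hp v w) a
  simpa using h

end JoyceAux2
section JoyceAux3

variable {n : ℕ} {U : Set (EE n)} (hU : IsOpen U) {J : (Fin n → ℂ) → (Fin n → ℂ) → ℂ}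
  (hsm : ContDiffOn ℂ ⊤ (fun p : EE n => J p.1 p.2) U) {p : EE n} (hp : p ∈ U)

include hU hsm hp

lemma C1 (a : Fin n) (δ : ℂ) (c : Fin n → ℂ) (w : EE n) :
    pd a (fun θ' => δ + ∑ j, c j * JF2 J (p.1, θ') (etv j) w) p.2
      = ∑ j, c j * JF3 J p (etv a) (etv j) w := by
  have H : HasFDerivAt (fun q => δ + ∑ j, c j * JF2 J q (etv j) w)
      (∑ j, c j • (((JF3 J p).flip (etv j)).flip w)) p :=
    (HasFDerivAt.fun_sum fun j _ => (hasF2app hU hsm hp (etv j) w).const_mul (c j)).const_add δ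
  have h := pd_snd H a
  simpa using h

lemma C2 (a : Fin n) (δ : ℂ) (c : Fin n → ℂ) (w : EE n) :
    pd a (fun z' => δ + ∑ j, c j * JF2 J (z', p.2) (etv j) w) p.1
      = ∑ j, c j * JF3 J p (ezv a) (etv j) w := by
  have H : HasFDerivAt (fun q => δ + ∑ j, c j * JF2 J q (etv j) w)
      (∑ j, c j • (((JF3 J p).flip (etv j)).flip w)) p :=
    (HasFDerivAt.fun_sum fun j _ => (hasF2app hU hsm hp (etv j) w).const_mul (c j)).const_add δ
  have h := pd_fst H a
  simpa using h

lemma C3 (a : Fin n) (v₁ w₁ v₂ w₂ : EE n) :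
    pd a (fun θ' => JF2 J (p.1, θ') v₁ w₁ - JF2 J (p.1, θ') v₂ w₂) p.2
      = JF3 J p (etv a) v₁ w₁ - JF3 J p (etv a) v₂ w₂ := by
  have H := (hasF2app hU hsm hp v₁ w₁).sub (hasF2app hU hsm hp v₂ w₂)
  have h := pd_snd H a
  simpa using h

lemma C4 (a : Fin n) (η : Fin n → Fin n → ℂ) (w₁ w₂ : EE n) :
    pd a (fun θ' => ∑ r, ∑ q, η r q * JF2 J (p.1, θ') (etv r) w₂
        * JF2 J (p.1, θ') (etv q) w₁) p.2
      = ∑ r, ∑ q, η r q * (JF3 J p (etv a) (etv r) w₂ * JF2 J p (etv q) w₁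
          + JF2 J p (etv r) w₂ * JF3 J p (etv a) (etv q) w₁) := by
  have H : HasFDerivAt
      (fun q' => ∑ r, ∑ q, η r q * JF2 J q' (etv r) w₂ * JF2 J q' (etv q) w₁)
      (∑ r, ∑ q, ((η r q * JF2 J p (etv r) w₂) • (((JF3 J p).flip (etv q)).flip w₁)
        + (JF2 J p (etv q) w₁) • (η r q • (((JF3 J p).flip (etv r)).flip w₂)))) p :=
    HasFDerivAt.fun_sum fun r _ => HasFDerivAt.fun_sum fun q _ =>
      ((hasF2app hU hsm hp (etv r) w₂).const_mul (η r q)).mul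
        (hasF2app hU hsm hp (etv q) w₁)
  have h := pd_snd H a
  simp only [ContinuousLinearMap.coe_sum', Finset.sum_apply,
    ContinuousLinearMap.add_apply, ContinuousLinearMap.coe_smul', Pi.smul_apply,
    ContinuousLinearMap.flip_apply, smul_eq_mul] at h
  rw [h]
  refine Finset.sum_congr rfl fun r _ => Finset.sum_congr rfl fun q _ => ?_
  ring

end JoyceAux3
section JoyceAlg

variable {n : ℕ}

lemma cancelSum (η : Fin n → Fin n → ℂ) (m : Fin n) (x : Fin n → ℂ)
    (T : Fin n → Fin n → ℂ) (hT : ∀ b c, T b c = T c b) :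
    ∑ b, ∑ c, η b m * x c * T b c = ∑ b, ∑ c, η c m * x b * T b c := by
  rw [Finset.sum_comm]
  exact Finset.sum_congr rfl fun b _ => Finset.sum_congr rfl fun c _ => by rw [hT]

lemma joyceAlgebra (η : Fin n → Fin n → ℂ) (hη : ∀ i j, η i j = -η j i)
    (A : Fin n → Fin n → ℂ) (B C : Fin n → Fin n → Fin n → ℂ)
    (hC1 : ∀ a b c, C a b c = C b a c) (hC2 : ∀ a b c, C a b c = C a c b)
    (m i₁ i₂ : Fin n) (h : ℂ)
    (hkey : ∀ a, B a i₁ i₂ - B a i₂ i₁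
      = ∑ r, ∑ q, η r q * (C a r i₂ * A q i₁ + A r i₂ * C a q i₁)) :
    ∑ j, η j m * B j i₁ i₂ + h * ∑ j, η j m * C i₁ j i₂
        + ∑ j, ∑ k, η j k * A j i₁ * (∑ l, η l m * C k l i₂)
      = ∑ j, η j m * B j i₂ i₁ + h * ∑ j, η j m * C i₂ j i₁
        + ∑ j, ∑ k, η j k * A j i₂ * (∑ l, η l m * C k l i₁) := by
  have hCmid : ∑ j, η j m * C i₁ j i₂ = ∑ j, η j m * C i₂ j i₁ :=
    Finset.sum_congr rfl fun j _ => by rw [hC1 i₁ j i₂, hC2 j i₁ i₂, hC1 j i₂ i₁]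
  -- normalize the quadratic terms as triple sums
  have hQ1 : ∑ j, ∑ k, η j k * A j i₁ * (∑ l, η l m * C k l i₂)
      = ∑ j, ∑ k, ∑ l, η j k * A j i₁ * (η l m * C k l i₂) :=
    Finset.sum_congr rfl fun j _ => Finset.sum_congr rfl fun k _ => Finset.mul_sum _ _ _
  have hQ2 : ∑ j, ∑ k, η j k * A j i₂ * (∑ l, η l m * C k l i₁)
      = ∑ j, ∑ k, ∑ l, η j k * A j i₂ * (η l m * C k l i₁) :=
    Finset.sum_congr rfl fun j _ => Finset.sum_congr rfl fun k _ => Finset.mul_sum _ _ _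
  -- the B-difference as two triple sums
  have e1 : ∑ j, η j m * B j i₁ i₂ - ∑ j, η j m * B j i₂ i₁
      = (∑ j, ∑ r, ∑ q, η j m * η r q * C j r i₂ * A q i₁)
        + ∑ j, ∑ r, ∑ q, η j m * η r q * A r i₂ * C j q i₁ := by
    rw [← Finset.sum_sub_distrib, ← Finset.sum_add_distrib]
    refine Finset.sum_congr rfl fun j _ => ?_
    rw [← mul_sub, hkey j, Finset.mul_sum, ← Finset.sum_add_distrib]
    refine Finset.sum_congr rfl fun r _ => ?_
    rw [Finset.mul_sum, ← Finset.sum_add_distrib]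
    refine Finset.sum_congr rfl fun q _ => ?_
    ring
  -- Claim A : first triple sum equals the negative of the i₁-quadratic term
  have claimA : (∑ j, ∑ r, ∑ q, η j m * η r q * C j r i₂ * A q i₁)
      = -∑ j, ∑ k, ∑ l, η j k * A j i₁ * (η l m * C k l i₂) := by
    have step1 : (∑ j, ∑ r, ∑ q, η j m * η r q * C j r i₂ * A q i₁)
        = ∑ q, ∑ j, ∑ r, η j m * η r q * C j r i₂ * A q i₁ := by
      rw [show (∑ j, ∑ r, ∑ q, η j m * η r q * C j r i₂ * A q i₁)
          = ∑ j, ∑ q, ∑ r, η j m * η r q * C j r i₂ * A q i₁ from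
        Finset.sum_congr rfl fun j _ => Finset.sum_comm]
      exact Finset.sum_comm
    rw [step1, ← Finset.sum_neg_distrib]
    refine Finset.sum_congr rfl fun a _ => ?_
    have hc := cancelSum η m (fun c => η c a * A a i₁) (fun b c => C b c i₂)
      (fun b c => hC1 b c i₂)
    calc ∑ j, ∑ r, η j m * η r a * C j r i₂ * A a i₁
        = ∑ b, ∑ c, η b m * (η c a * A a i₁) * C b c i₂ :=
          Finset.sum_congr rfl fun b _ => Finset.sum_congr rfl fun c _ => by ring
      _ = ∑ b, ∑ c, η c m * (η b a * A a i₁) * C b c i₂ := hc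
      _ = -∑ b, ∑ c, η a b * A a i₁ * (η c m * C b c i₂) := by
          rw [← Finset.sum_neg_distrib]
          refine Finset.sum_congr rfl fun b _ => ?_
          rw [← Finset.sum_neg_distrib]
          refine Finset.sum_congr rfl fun c _ => ?_
          rw [hη a b]; ring
  -- Claim B : second triple sum equals the i₂-quadratic term
  have claimB : (∑ j, ∑ r, ∑ q, η j m * η r q * A r i₂ * C j q i₁)
      = ∑ j, ∑ k, ∑ l, η j k * A j i₂ * (η l m * C k l i₁) := by
    rw [Finset.sum_comm]
    refine Finset.sum_congr rfl fun r _ => ?_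
    have hc := cancelSum η m (fun c => η r c * A r i₂) (fun b c => C b c i₁)
      (fun b c => hC1 b c i₁)
    calc ∑ j, ∑ q, η j m * η r q * A r i₂ * C j q i₁
        = ∑ b, ∑ c, η b m * (η r c * A r i₂) * C b c i₁ :=
          Finset.sum_congr rfl fun b _ => Finset.sum_congr rfl fun c _ => by ring
      _ = ∑ b, ∑ c, η c m * (η r b * A r i₂) * C b c i₁ := hc
      _ = ∑ b, ∑ c, η r b * A r i₂ * (η c m * C b c i₁) :=
          Finset.sum_congr rfl fun b _ => Finset.sum_congr rfl fun c _ => by ring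
  rw [hCmid, hQ1, hQ2]
  linear_combination e1 + claimA + claimB
end JoyceAlg
section JoyceMain

variable {n : ℕ} {U : Set (EE n)} (hU : IsOpen U) {J : (Fin n → ℂ) → (Fin n → ℂ) → ℂ}
  (hsm : ContDiffOn ℂ ⊤ (fun p : EE n => J p.1 p.2) U) {z θ : Fin n → ℂ}
  (hzθ : (z, θ) ∈ U)

include hU hsm hzθ

lemma sliceθ_mem' : {θ' | (z, θ') ∈ U} ∈ nhds θ :=
  sliceθ_mem hU hsm (p := (z, θ)) hzθ

lemma slicez_mem' : {z' | (z', θ) ∈ U} ∈ nhds z :=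
  slicez_mem hU hsm (p := (z, θ)) hzθ

lemma R1' (i j : Fin n) : pd j (pd i (J z)) θ = JF2 J (z, θ) (etv j) (etv i) :=
  R1 hU hsm (p := (z, θ)) hzθ i j

lemma R2' (i j : Fin n) :
    pd j (fun z' => pd i (J z') θ) z = JF2 J (z, θ) (ezv j) (etv i) :=
  R2 hU hsm (p := (z, θ)) hzθ i j

/-- reduction of the `θ`-component of `X_i (thetaCoef i')` to Fréchet derivatives. -/
lemma vec_theta_eq (η : Fin n → Fin n → ℂ) (ℏ : ℂ) (m i i' : Fin n) :
    vecField η J ℏ i (thetaCoef η J ℏ i' m) z θ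
      = ∑ j, η j m * JF3 J (z, θ) (etv j) (ezv i) (etv i')
        + ℏ⁻¹ * ∑ j, η j m * JF3 J (z, θ) (etv i) (etv j) (etv i')
        + ∑ j, ∑ k, η j k * JF2 J (z, θ) (etv j) (etv i)
            * (∑ l, η l m * JF3 J (z, θ) (etv k) (etv l) (etv i')) := by
  have hev1 : (fun z' => thetaCoef η J ℏ i' m z' θ) =ᶠ[nhds z]
      fun z' => (if i' = m then ℏ⁻¹ else 0)
        + ∑ j, η j m * JF2 J (z', θ) (etv j) (etv i') := by
    filter_upwards [slicez_mem' hU hsm hzθ] with z' hz'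
    unfold thetaCoef
    exact congrArg _ (Finset.sum_congr rfl fun j _ => by rw [R1' hU hsm hz'])
  have hev2 : thetaCoef η J ℏ i' m z =ᶠ[nhds θ]
      fun θ' => (if i' = m then ℏ⁻¹ else 0)
        + ∑ j, η j m * JF2 J (z, θ') (etv j) (etv i') := by
    filter_upwards [sliceθ_mem' hU hsm hzθ] with θ' hθ'
    show thetaCoef η J ℏ i' m z θ' = _
    unfold thetaCoef
    exact congrArg _ (Finset.sum_congr rfl fun j _ => by rw [R1' hU hsm hθ'])
  have hS1 : pd i (fun z' => thetaCoef η J ℏ i' m z' θ) z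
      = ∑ j, η j m * JF3 J (z, θ) (etv j) (ezv i) (etv i') := by
    rw [pd_congr_nhds hev1 i,
      C2 hU hsm (p := (z, θ)) hzθ i (if i' = m then ℏ⁻¹ else 0) (fun j => η j m) (etv i')]
    exact Finset.sum_congr rfl fun j _ => by
      rw [sym3a hU hsm (p := (z, θ)) hzθ (ezv i) (etv j) (etv i')]
  have hS2 : ∀ a : Fin n, pd a (thetaCoef η J ℏ i' m z) θ
      = ∑ j, η j m * JF3 J (z, θ) (etv a) (etv j) (etv i') := by
    intro a
    rw [pd_congr_nhds hev2 a,
      C1 hU hsm (p := (z, θ)) hzθ a (if i' = m then ℏ⁻¹ else 0) (fun j => η j m) (etv i')]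
  have hA : ∀ j : Fin n, pd j (pd i (J z)) θ = JF2 J (z, θ) (etv j) (etv i) :=
    fun j => R1' hU hsm hzθ i j
  unfold vecField
  rw [hS1, hS2 i]
  congr 1
  exact Finset.sum_congr rfl fun j _ => Finset.sum_congr rfl fun k _ => by
    rw [hA j, hS2 k]

/-- θ-derivative of the Joyce PDE. -/
lemma pde_deriv (η : Fin n → Fin n → ℂ)
    (hPDE : ∀ z θ, (z, θ) ∈ U → ∀ i j,
      pd j (fun z' => pd i (J z') θ) z - pd i (fun z' => pd j (J z') θ) z =
        ∑ p, ∑ q, η p q * pd p (pd i (J z)) θ * pd q (pd j (J z)) θ)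
    (i₁ i₂ a : Fin n) :
    JF3 J (z, θ) (etv a) (ezv i₁) (etv i₂) - JF3 J (z, θ) (etv a) (ezv i₂) (etv i₁)
      = ∑ r, ∑ q, η r q *
          (JF3 J (z, θ) (etv a) (etv r) (etv i₂) * JF2 J (z, θ) (etv q) (etv i₁)
            + JF2 J (z, θ) (etv r) (etv i₂) * JF3 J (z, θ) (etv a) (etv q) (etv i₁)) := by
  have hev : (fun θ' => JF2 J (z, θ') (ezv i₁) (etv i₂) - JF2 J (z, θ') (ezv i₂) (etv i₁))
      =ᶠ[nhds θ] fun θ' => ∑ r, ∑ q, η r q * JF2 J (z, θ') (etv r) (etv i₂)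
          * JF2 J (z, θ') (etv q) (etv i₁) := by
    filter_upwards [sliceθ_mem' hU hsm hzθ] with θ' hθ'
    have h := hPDE z θ' hθ' i₂ i₁
    rw [R2' hU hsm hθ' i₂ i₁, R2' hU hsm hθ' i₁ i₂] at h
    rw [h]
    exact Finset.sum_congr rfl fun r _ => Finset.sum_congr rfl fun q _ => by
      rw [R1' hU hsm hθ', R1' hU hsm hθ']
  have hL := C3 hU hsm (p := (z, θ)) hzθ a (ezv i₁) (etv i₂) (ezv i₂) (etv i₁)
  have hR := C4 hU hsm (p := (z, θ)) hzθ a η (etv i₁) (etv i₂)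
  rw [← hL, ← hR]
  exact pd_congr_nhds hev a

end JoyceMain

/-- If `J` satisfies the Joyce PDE on an open set `U`, then for every `ℏ ∈ ℂ*` the
vector fields `X_i^{(ℏ)}` pairwise commute on `U`: all components of the Lie bracket
`[X_{i₁}^{(ℏ)}, X_{i₂}^{(ℏ)}] = X_{i₁}(X_{i₂}^{coef}) - X_{i₂}(X_{i₁}^{coef})` vanish. -/
theorem joyce_pencil_flat {n : ℕ} (η : Fin n → Fin n → ℂ)
    (hη : ∀ i j, η i j = -η j i)
    (U : Set ((Fin n → ℂ) × (Fin n → ℂ))) (hU : IsOpen U)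
    (J : (Fin n → ℂ) → (Fin n → ℂ) → ℂ)
    (hsmooth : ContDiffOn ℂ ⊤ (fun p => J p.1 p.2) U)
    (hPDE : ∀ z θ, (z, θ) ∈ U → ∀ i j,
      pd j (fun z' => pd i (J z') θ) z - pd i (fun z' => pd j (J z') θ) z =
        ∑ p, ∑ q, η p q * pd p (pd i (J z)) θ * pd q (pd j (J z)) θ)
    (ℏ : ℂ) (hℏ : ℏ ≠ 0) :
    ∀ i₁ i₂ m : Fin n, ∀ z θ, (z, θ) ∈ U →
      vecField η J ℏ i₁ (thetaCoef η J ℏ i₂ m) z θ =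
          vecField η J ℏ i₂ (thetaCoef η J ℏ i₁ m) z θ ∧
        vecField η J ℏ i₁ (zCoef ℏ i₂ m) z θ =
          vecField η J ℏ i₂ (zCoef ℏ i₁ m) z θ := by
  intro i₁ i₂ m z θ hzθ
  constructor
  · rw [vec_theta_eq hU hsmooth hzθ η ℏ m i₁ i₂, vec_theta_eq hU hsmooth hzθ η ℏ m i₂ i₁]
    exact joyceAlgebra η hη
      (fun j i => JF2 J (z, θ) (etv j) (etv i))
      (fun a s t => JF3 J (z, θ) (etv a) (ezv s) (etv t))
      (fun a b c => JF3 J (z, θ) (etv a) (etv b) (etv c))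
      (fun a b c => sym3a hU hsmooth (p := (z, θ)) hzθ (etv a) (etv b) (etv c))
      (fun a b c => sym3c hU hsmooth (p := (z, θ)) hzθ (etv a) (etv b) (etv c))
      m i₁ i₂ ℏ⁻¹ (fun a => pde_deriv hU hsmooth hzθ η hPDE i₁ i₂ a)
  · have pdc : ∀ (i : Fin n) (x : Fin n → ℂ) (c : ℂ), pd i (fun _ => c) x = 0 := by
      intro i x c; simp [pd]
    have hz : ∀ (i' m' a : Fin n), pd a (zCoef ℏ i' m' z) θ = 0 := fun i' m' a =>
      pdc a θ (if i' = m' then 1 else 0)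
    simp [vecField, zCoef, pdc, hz]
end

section
/- Let U ⊆ ℂⁿ open, V ⊆ ℂⁿ a neighbourhood of 0, J : U × V → ℂ holomorphic, odd in the second variable (J(z,-θ) = -J(z,θ)), and satisfying the Joyce PDE ∂²J/∂θ_i∂z_j - ∂²J/∂θ_j∂z_i = ∑_{p,q} η_{pq}(∂²J/∂θ_i∂θ_p)(∂²J/∂θ_j∂θ_q) for a constant antisymmetric matrix η. Define the Christoffel symbols Γ^m_{ij}(z) = -∑_l η_{lm}·∂³J/∂θ_i∂θ_j∂θ_l (z, 0). Then the associated connection is flat: for all i, j, k, m, ∂Γ^m_{jk}/∂z_i - ∂Γ^m_{ik}/∂z_j + ∑_q (Γ^m_{iq}Γ^q_{jk} - Γ^m_{jq}Γ^q_{ik}) = 0. Moreover it is torsion-free: Γ^m_{ij} = Γ^m_{ji}. -/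
open Set Function ContDiff


section aux
variable {F : Type*} [NormedAddCommGroup F] [NormedSpace ℂ F]

noncomputable def dd (v : F) (g : F → ℂ) : F → ℂ := fun x => fderiv ℂ g x v

lemma dd_congr {s : Set F} (hs : IsOpen s) {f g : F → ℂ} (h : ∀ y ∈ s, f y = g y)
    {x : F} (hx : x ∈ s) (v : F) : dd v f x = dd v g x := by
  have : f =ᶠ[nhds x] g := Filter.eventuallyEq_iff_exists_mem.2 ⟨s, hs.mem_nhds hx, h⟩
  simp only [dd, this.fderiv_eq]

lemma contDiffOn_dd {s : Set F} (hs : IsOpen s) {g : F → ℂ}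
    (hg : ContDiffOn ℂ ∞ g s) (v : F) : ContDiffOn ℂ ∞ (dd v g) s := by
  have h1 : ContDiffOn ℂ ∞ (fderiv ℂ g) s :=
    ((contDiffOn_infty_iff_fderiv_of_isOpen hs).1 hg).2
  exact (ContinuousLinearMap.apply ℂ ℂ v).contDiff.comp_contDiffOn h1

lemma diffAt_of_cdOn {s : Set F} (hs : IsOpen s) {g : F → ℂ}
    (hg : ContDiffOn ℂ ∞ g s) {x : F} (hx : x ∈ s) : DifferentiableAt ℂ g x :=
  ((hg x hx).contDiffAt (hs.mem_nhds hx)).differentiableAt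
    (by simp)

lemma dd_comm {s : Set F} (hs : IsOpen s) {g : F → ℂ}
    (hg : ContDiffOn ℂ ∞ g s) {x : F} (hx : x ∈ s) (v w : F) :
    dd v (dd w g) x = dd w (dd v g) x := by
  have hat : ContDiffAt ℂ ∞ g x := (hg x hx).contDiffAt (hs.mem_nhds hx)
  have hsymm : IsSymmSndFDerivAt ℂ g x := hat.isSymmSndFDerivAt (by
    rw [minSmoothness_of_isRCLikeNormedField, show (2 : WithTop ℕ∞) = ((2:ℕ∞):WithTop ℕ∞) from rfl]; exact WithTop.coe_le_coe.2 le_top)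
  have hdf : DifferentiableAt ℂ (fderiv ℂ g) x := by
    have h1 := ((contDiffOn_infty_iff_fderiv_of_isOpen hs).1 hg).2
    exact ((h1 x hx).contDiffAt (hs.mem_nhds hx)).differentiableAt
      (by simp)
  have e1 : dd v (dd w g) x = fderiv ℂ (fderiv ℂ g) x v w := by
    show fderiv ℂ (fun y => fderiv ℂ g y w) x v = _
    have : fderiv ℂ (fun y => fderiv ℂ g y w) x = (fderiv ℂ (fderiv ℂ g) x).flip w := by
      have := fderiv_clm_apply (c := fderiv ℂ g) (u := fun _ => w) hdf
        (differentiableAt_const w)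
      simpa using this
    rw [this]; simp
  have e2 : dd w (dd v g) x = fderiv ℂ (fderiv ℂ g) x w v := by
    show fderiv ℂ (fun y => fderiv ℂ g y v) x w = _
    have : fderiv ℂ (fun y => fderiv ℂ g y v) x = (fderiv ℂ (fderiv ℂ g) x).flip v := by
      have := fderiv_clm_apply (c := fderiv ℂ g) (u := fun _ => v) hdf
        (differentiableAt_const v)
      simpa using this
    rw [this]; simp
  rw [e1, e2, hsymm v w]

lemma dd_neg_dir (v : F) (f : F → ℂ) (x : F) : dd (-v) f x = -dd v f x := by simp [dd]

lemma dd_sub {f g : F → ℂ} {x : F} (hf : DifferentiableAt ℂ f x)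
    (hg : DifferentiableAt ℂ g x) (v : F) :
    dd v (fun y => f y - g y) x = dd v f x - dd v g x := by
  simp [dd, fderiv_fun_sub hf hg]

lemma dd_add {f g : F → ℂ} {x : F} (hf : DifferentiableAt ℂ f x)
    (hg : DifferentiableAt ℂ g x) (v : F) :
    dd v (fun y => f y + g y) x = dd v f x + dd v g x := by
  simp [dd, fderiv_fun_add hf hg]

lemma dd_sum {ι : Type*} {u : Finset ι} {A : ι → F → ℂ} {x : F}
    (h : ∀ p ∈ u, DifferentiableAt ℂ (A p) x) (v : F) :
    dd v (fun y => ∑ p ∈ u, A p y) x = ∑ p ∈ u, dd v (A p) x := by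
  simp [dd, fderiv_fun_sum h]

lemma dd_mul {f g : F → ℂ} {x : F} (hf : DifferentiableAt ℂ f x)
    (hg : DifferentiableAt ℂ g x) (v : F) :
    dd v (fun y => f y * g y) x = f x * dd v g x + g x * dd v f x := by
  simp [dd, fderiv_fun_mul hf hg]

lemma dd_const_mul {f : F → ℂ} {x : F} (hf : DifferentiableAt ℂ f x) (b : ℂ) (v : F) :
    dd v (fun y => b * f y) x = b * dd v f x := by
  simp [dd, fderiv_const_mul hf b]

lemma dd_neg (f : F → ℂ) (x : F) (v : F) : dd v (fun y => -f y) x = -dd v f x := by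
  simp [dd, fderiv_neg]

lemma dd_symm {s : Set F} (hs : IsOpen s) (N : F →L[ℂ] F) (hN : ∀ y ∈ s, N y ∈ s)
    (hNN : ∀ y, N (N y) = y) {f : F → ℂ} {c : ℂ} (h : ∀ y ∈ s, f (N y) = c * f y)
    (hf : ContDiffOn ℂ ∞ f s) {x : F} (hx : x ∈ s) (v : F) :
    dd v f (N x) = c * dd (N v) f x := by
  have hNx : N x ∈ s := hN x hx
  have hdiffN : DifferentiableAt ℂ f (N x) := diffAt_of_cdOn hs hf hNx
  have hdiffx : DifferentiableAt ℂ f x := diffAt_of_cdOn hs hf hx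
  have hcomp : fderiv ℂ (fun y => f (N y)) x = (fderiv ℂ f (N x)).comp (N : F →L[ℂ] F) := by
    have := fderiv_comp (𝕜 := ℂ) x hdiffN (N.differentiableAt (x := x))
    rw [N.fderiv] at this
    exact this
  have heq : fderiv ℂ (fun y => f (N y)) x = fderiv ℂ (fun y => c * f y) x := by
    have hev : (fun y => f (N y)) =ᶠ[nhds x] (fun y => c * f y) :=
      Filter.eventuallyEq_iff_exists_mem.2 ⟨s, hs.mem_nhds hx, h⟩
    exact hev.fderiv_eq
  have hc : fderiv ℂ (fun y => c * f y) x = c • fderiv ℂ f x := fderiv_const_mul hdiffx c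
  have := congrArg (fun (L : F →L[ℂ] ℂ) => L (N v)) (hcomp.symm.trans (heq.trans hc))
  simpa [dd, hNN v] using this

end aux

lemma update_eq {n : ℕ} (x : Fin n → ℂ) (i : Fin n) (t : ℂ) :
    Function.update x i t = x + (t - x i) • (Pi.single i 1 : Fin n → ℂ) := by
  funext j
  by_cases h : j = i
  · subst h; simp
  · simp [Function.update_of_ne h, Pi.single_apply, h]

lemma hasDerivAt_affine {F : Type*} [NormedAddCommGroup F] [NormedSpace ℂ F]
    (x v : F) (a : ℂ) : HasDerivAt (fun t : ℂ => x + (t - a) • v) v a := by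
  simpa using (((hasDerivAt_id a).sub_const a).smul_const v).const_add x

lemma pd_congr {n : ℕ} {s : Set (Fin n → ℂ)} (hs : IsOpen s) {f g : (Fin n → ℂ) → ℂ}
    (h : ∀ y ∈ s, f y = g y) {x : Fin n → ℂ} (hx : x ∈ s) (i : Fin n) :
    pd i f x = pd i g x := by
  unfold pd
  apply Filter.EventuallyEq.deriv_eq
  have hcont : Continuous (fun t : ℂ => Function.update x i t) := by
    simp only [update_eq]
    fun_prop
  have hmem : ∀ᶠ t in nhds (x i), Function.update x i t ∈ s := by
    have h0 : Function.update x i (x i) = x := Function.update_eq_self i x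
    exact hcont.continuousAt.preimage_mem_nhds (by rw [h0]; exact hs.mem_nhds hx)
  filter_upwards [hmem] with t ht using h _ ht

lemma pd_eq_dd_snd {n : ℕ} {g : (Fin n → ℂ) × (Fin n → ℂ) → ℂ} {z θ : Fin n → ℂ}
    (h : DifferentiableAt ℂ g (z, θ)) (i : Fin n) :
    pd i (fun θ' => g (z, θ')) θ = dd ((0, Pi.single i 1)) g (z, θ) := by
  have hc : (fun t : ℂ => ((z, Function.update θ i t) : (Fin n → ℂ) × (Fin n → ℂ))) =
      fun t => ((z, θ) : (Fin n → ℂ) × (Fin n → ℂ)) +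
        (t - θ i) • (((0 : Fin n → ℂ), (Pi.single i 1 : Fin n → ℂ))) := by
    funext t
    rw [update_eq]
    simp [Prod.ext_iff]
  have curve : HasDerivAt (fun t : ℂ => ((z, Function.update θ i t) :
      (Fin n → ℂ) × (Fin n → ℂ))) ((0, Pi.single i 1)) (θ i) := by
    rw [hc]; exact hasDerivAt_affine _ _ _
  have hpt : ((z, Function.update θ i (θ i)) : (Fin n → ℂ) × (Fin n → ℂ)) = (z, θ) := by
    rw [Function.update_eq_self]
  have hFD : HasFDerivAt g (fderiv ℂ g (z, θ)) ((z, Function.update θ i (θ i)) :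
      (Fin n → ℂ) × (Fin n → ℂ)) := by rw [hpt]; exact h.hasFDerivAt
  exact (hFD.comp_hasDerivAt (θ i) curve).deriv

lemma pd_eq_dd_fst {n : ℕ} {g : (Fin n → ℂ) × (Fin n → ℂ) → ℂ} {z θ : Fin n → ℂ}
    (h : DifferentiableAt ℂ g (z, θ)) (j : Fin n) :
    pd j (fun z' => g (z', θ)) z = dd ((Pi.single j 1, 0)) g (z, θ) := by
  have hc : (fun t : ℂ => ((Function.update z j t, θ) : (Fin n → ℂ) × (Fin n → ℂ))) =
      fun t => ((z, θ) : (Fin n → ℂ) × (Fin n → ℂ)) +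
        (t - z j) • (((Pi.single j 1 : Fin n → ℂ), (0 : Fin n → ℂ))) := by
    funext t
    rw [update_eq]
    simp [Prod.ext_iff]
  have curve : HasDerivAt (fun t : ℂ => ((Function.update z j t, θ) :
      (Fin n → ℂ) × (Fin n → ℂ))) ((Pi.single j 1, 0)) (z j) := by
    rw [hc]; exact hasDerivAt_affine _ _ _
  have hpt : ((Function.update z j (z j), θ) : (Fin n → ℂ) × (Fin n → ℂ)) = (z, θ) := by
    rw [Function.update_eq_self]
  have hFD : HasFDerivAt g (fderiv ℂ g (z, θ)) ((Function.update z j (z j), θ) :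
      (Fin n → ℂ) × (Fin n → ℂ)) := by rw [hpt]; exact h.hasFDerivAt
  exact (hFD.comp_hasDerivAt (z j) curve).deriv

lemma alg_lemma {n : ℕ} (η : Fin n → Fin n → ℂ) (hη : ∀ i j, η i j = -η j i)
    (W : Fin n → Fin n → Fin n → ℂ) (hW1 : ∀ a b c, W a b c = W a c b)
    (i j k m : Fin n) :
    ∑ l, η l m * (∑ p, ∑ q, η p q * (W i p k * W j q l + W i p l * W j q k))
    + ∑ q, ((∑ l, η l m * W i q l) * (∑ p, η p q * W j k p)
        - (∑ l, η l m * W j q l) * (∑ p, η p q * W i k p)) = 0 := by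
  have claim1 : ∑ q, (∑ l, η l m * W i q l) * (∑ p, η p q * W j k p)
      = -∑ l, ∑ p, ∑ q, η l m * (η p q * (W i p l * W j q k)) := by
    have e1 : ∀ q : Fin n, (∑ l, η l m * W i q l) * (∑ p, η p q * W j k p)
        = ∑ l, ∑ p, η l m * W i q l * (η p q * W j k p) := by
      intro q; rw [Finset.sum_mul_sum]
    rw [Finset.sum_congr rfl (fun q _ => e1 q)]
    rw [Finset.sum_comm]
    rw [← Finset.sum_neg_distrib]
    refine Finset.sum_congr rfl (fun l _ => ?_)
    rw [← Finset.sum_neg_distrib]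
    refine Finset.sum_congr rfl (fun p _ => ?_)
    rw [← Finset.sum_neg_distrib]
    refine Finset.sum_congr rfl (fun q _ => ?_)
    rw [hη q p, hW1 j k q]
    ring
  have claim2 : ∑ q, (∑ l, η l m * W j q l) * (∑ p, η p q * W i k p)
      = ∑ l, ∑ p, ∑ q, η l m * (η p q * (W i p k * W j q l)) := by
    have e1 : ∀ q : Fin n, (∑ l, η l m * W j q l) * (∑ p, η p q * W i k p)
        = ∑ l, ∑ p, η l m * W j q l * (η p q * W i k p) := by
      intro q; rw [Finset.sum_mul_sum]
    rw [Finset.sum_congr rfl (fun q _ => e1 q)]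
    rw [Finset.sum_comm]
    refine Finset.sum_congr rfl (fun l _ => ?_)
    rw [Finset.sum_comm]
    refine Finset.sum_congr rfl (fun p _ => ?_)
    refine Finset.sum_congr rfl (fun q _ => ?_)
    rw [hW1 i k p]
    ring
  have expand : ∑ l, η l m * (∑ p, ∑ q, η p q * (W i p k * W j q l + W i p l * W j q k))
      = (∑ l, ∑ p, ∑ q, η l m * (η p q * (W i p k * W j q l)))
      + ∑ l, ∑ p, ∑ q, η l m * (η p q * (W i p l * W j q k)) := by
    rw [← Finset.sum_add_distrib]
    refine Finset.sum_congr rfl (fun l _ => ?_)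
    rw [Finset.mul_sum, ← Finset.sum_add_distrib]
    refine Finset.sum_congr rfl (fun p _ => ?_)
    rw [Finset.mul_sum, ← Finset.sum_add_distrib]
    refine Finset.sum_congr rfl (fun q _ => ?_)
    ring
  rw [Finset.sum_sub_distrib, claim1, claim2, expand]
  ring

/-- The linear Joyce connection, with Christoffel symbols
`Γ^m_{ij}(z) = -∑_l η_{lm} (∂³J/∂θ_i∂θ_j∂θ_l)(z,0)`, is flat and torsion-free. -/
theorem linear_joyce_connection_flat {n : ℕ} (η : Fin n → Fin n → ℂ)
    (hη : ∀ i j, η i j = -η j i)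
    (U : Set (Fin n → ℂ)) (hU : IsOpen U)
    (V : Set (Fin n → ℂ)) (hV : IsOpen V) (h0V : (0 : Fin n → ℂ) ∈ V)
    (J : (Fin n → ℂ) → (Fin n → ℂ) → ℂ)
    (hodd : ∀ z θ, J z (-θ) = -J z θ)
    (hsmooth : ContDiffOn ℂ ⊤ (fun p : (Fin n → ℂ) × (Fin n → ℂ) => J p.1 p.2) (U ×ˢ V))
    (hPDE : ∀ z ∈ U, ∀ θ ∈ V, ∀ i j,
      pd j (fun z' => pd i (J z') θ) z - pd i (fun z' => pd j (J z') θ) z =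
        ∑ p, ∑ q, η p q * pd p (pd i (J z)) θ * pd q (pd j (J z)) θ)
    (Γc : Fin n → Fin n → Fin n → (Fin n → ℂ) → ℂ)
    (hΓ : ∀ m i j z, Γc m i j z = -∑ l, η l m * pd l (pd j (pd i (J z))) 0) :
    ∀ z ∈ U,
      (∀ i j k m,
        pd i (Γc m j k) z - pd j (Γc m i k) z +
          ∑ q, (Γc m i q z * Γc q j k z - Γc m j q z * Γc q i k z) = 0) ∧
      ∀ i j m, Γc m i j z = Γc m j i z := by
  classical
  intro z hz
  set Jh : (Fin n → ℂ) × (Fin n → ℂ) → ℂ := fun p => J p.1 p.2 with hJhdef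
  have hsopen : IsOpen (U ×ˢ V) := hU.prod hV
  have hJs : ContDiffOn ℂ ∞ Jh (U ×ˢ V) := hsmooth.of_le le_top
  -- directions
  set εv : Fin n → (Fin n → ℂ) × (Fin n → ℂ) := fun i => (0, Pi.single i 1) with hεv
  set δv : Fin n → (Fin n → ℂ) × (Fin n → ℂ) := fun j => (Pi.single j 1, 0) with hδv
  -- smoothness of directional derivatives
  have hG1s : ∀ i, ContDiffOn ℂ ∞ (dd (εv i) Jh) (U ×ˢ V) :=
    fun i => contDiffOn_dd hsopen hJs _
  have hG2s : ∀ i p, ContDiffOn ℂ ∞ (dd (εv p) (dd (εv i) Jh)) (U ×ˢ V) :=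
    fun i p => contDiffOn_dd hsopen (hG1s i) _
  have hG3s : ∀ i p l, ContDiffOn ℂ ∞ (dd (εv l) (dd (εv p) (dd (εv i) Jh))) (U ×ˢ V) :=
    fun i p l => contDiffOn_dd hsopen (hG2s i p) _
  have hG1δs : ∀ j i, ContDiffOn ℂ ∞ (dd (δv j) (dd (εv i) Jh)) (U ×ˢ V) :=
    fun j i => contDiffOn_dd hsopen (hG1s i) _
  have hG2δs : ∀ j i k, ContDiffOn ℂ ∞ (dd (δv j) (dd (εv k) (dd (εv i) Jh))) (U ×ˢ V) :=
    fun j i k => contDiffOn_dd hsopen (hG2s i k) _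
  have dA : ∀ {f : (Fin n → ℂ) × (Fin n → ℂ) → ℂ}, ContDiffOn ℂ ∞ f (U ×ˢ V) →
      ∀ {x}, x ∈ U ×ˢ V → DifferentiableAt ℂ f x :=
    fun {f} hf {x} hx => diffAt_of_cdOn hsopen hf hx
  have hmemUV : ∀ {z' θ' : Fin n → ℂ}, z' ∈ U → θ' ∈ V → ((z', θ') ∈ U ×ˢ V) :=
    fun h1 h2 => Set.mk_mem_prod h1 h2
  -- conversion lemmas
  have hc1 : ∀ z' ∈ U, ∀ θ' ∈ V, ∀ i, pd i (J z') θ' = dd (εv i) Jh (z', θ') := by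
    intro z' hz' θ' hθ' i
    exact pd_eq_dd_snd (g := Jh) (dA hJs (hmemUV hz' hθ')) i
  have hc2 : ∀ z' ∈ U, ∀ θ' ∈ V, ∀ i p,
      pd p (pd i (J z')) θ' = dd (εv p) (dd (εv i) Jh) (z', θ') := by
    intro z' hz' θ' hθ' i p
    rw [pd_congr hV (fun y hy => hc1 z' hz' y hy i) hθ' p]
    exact pd_eq_dd_snd (dA (hG1s i) (hmemUV hz' hθ')) p
  have hc3 : ∀ z' ∈ U, ∀ θ' ∈ V, ∀ i p l,
      pd l (pd p (pd i (J z'))) θ' = dd (εv l) (dd (εv p) (dd (εv i) Jh)) (z', θ') := by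
    intro z' hz' θ' hθ' i p l
    rw [pd_congr hV (fun y hy => hc2 z' hz' y hy i p) hθ' l]
    exact pd_eq_dd_snd (dA (hG2s i p) (hmemUV hz' hθ')) l
  have hc4 : ∀ z' ∈ U, ∀ θ' ∈ V, ∀ i j,
      pd j (fun z'' => pd i (J z'') θ') z' = dd (δv j) (dd (εv i) Jh) (z', θ') := by
    intro z' hz' θ' hθ' i j
    rw [pd_congr hU (fun y hy => hc1 y hy θ' hθ' i) hz' j]
    exact pd_eq_dd_fst (dA (hG1s i) (hmemUV hz' hθ')) j
  -- PDE in dd form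
  have hKey0 : ∀ i j, ∀ z' ∈ U, ∀ θ' ∈ V,
      dd (δv j) (dd (εv i) Jh) (z', θ') - dd (δv i) (dd (εv j) Jh) (z', θ') =
        ∑ p, ∑ q, η p q * dd (εv p) (dd (εv i) Jh) (z', θ')
          * dd (εv q) (dd (εv j) Jh) (z', θ') := by
    intro i j z' hz' θ' hθ'
    have h := hPDE z' hz' θ' hθ' i j
    rw [hc4 z' hz' θ' hθ' i j, hc4 z' hz' θ' hθ' j i] at h
    rw [h]
    refine Finset.sum_congr rfl (fun p _ => Finset.sum_congr rfl (fun q _ => ?_))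
    rw [hc2 z' hz' θ' hθ' i p, hc2 z' hz' θ' hθ' j q]
  -- oddness and vanishing of second θ-derivatives at θ = 0
  set V' : Set (Fin n → ℂ) := V ∩ (Neg.neg ⁻¹' V) with hV'def
  have hV'open : IsOpen V' := hV.inter (hV.preimage continuous_neg)
  have h0V' : (0 : Fin n → ℂ) ∈ V' := ⟨h0V, by simpa using h0V⟩
  have hsub : U ×ˢ V' ⊆ U ×ˢ V := Set.prod_mono_right Set.inter_subset_left
  have hs'open : IsOpen (U ×ˢ V') := hU.prod hV'open
  set N : ((Fin n → ℂ) × (Fin n → ℂ)) →L[ℂ] ((Fin n → ℂ) × (Fin n → ℂ)) :=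
    (ContinuousLinearMap.fst ℂ _ _).prod (-(ContinuousLinearMap.snd ℂ _ _)) with hNdef
  have hNval : ∀ p : (Fin n → ℂ) × (Fin n → ℂ), N p = (p.1, -p.2) := fun p => rfl
  have hNN : ∀ y, N (N y) = y := by intro y; rw [hNval, hNval]; simp
  have hNs : ∀ y ∈ U ×ˢ V', N y ∈ U ×ˢ V' := by
    rintro ⟨a, b⟩ ⟨ha, hb1, hb2⟩
    rw [hNval]
    exact ⟨ha, hb2, by simpa using hb1⟩
  have hJodd : ∀ y ∈ U ×ˢ V', Jh (N y) = (-1) * Jh y := by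
    intro y _
    rw [hNval]
    show J y.1 (-y.2) = -1 * Jh y
    rw [hodd y.1 y.2]
    ring_nf
    rfl
  have hG1even : ∀ i, ∀ y ∈ U ×ˢ V', dd (εv i) Jh (N y) = 1 * dd (εv i) Jh y := by
    intro i y hy
    have h1 := dd_symm hs'open N hNs hNN hJodd (hJs.mono hsub) hy (εv i)
    have h2 : N (εv i) = -(εv i) := by
      rw [hNval]
      simp [hεv]
    rw [h2, dd_neg_dir] at h1
    rw [h1]; ring
  have hG2odd : ∀ i p, ∀ y ∈ U ×ˢ V',
      dd (εv p) (dd (εv i) Jh) (N y) = -dd (εv p) (dd (εv i) Jh) y := by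
    intro i p y hy
    have h1 := dd_symm hs'open N hNs hNN (hG1even i) ((hG1s i).mono hsub) hy (εv p)
    have h2 : N (εv p) = -(εv p) := by
      rw [hNval]
      simp [hεv]
    rw [h2, dd_neg_dir] at h1
    rw [h1]; ring
  have hvanish : ∀ z' ∈ U, ∀ i p, dd (εv p) (dd (εv i) Jh) (z', (0 : Fin n → ℂ)) = 0 := by
    intro z' hz' i p
    have hy : ((z', (0 : Fin n → ℂ))) ∈ U ×ˢ V' := Set.mk_mem_prod hz' h0V'
    have h1 := hG2odd i p _ hy
    rw [hNval] at h1
    simp only [neg_zero] at h1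
    exact add_self_eq_zero.1 (by linear_combination h1)
  -- symmetry of third derivatives
  have hWsym1 : ∀ a b c, ∀ x ∈ U ×ˢ V,
      dd (εv c) (dd (εv b) (dd (εv a) Jh)) x = dd (εv b) (dd (εv c) (dd (εv a) Jh)) x :=
    fun a b c x hx => dd_comm hsopen (hG1s a) hx (εv c) (εv b)
  have hWsym2 : ∀ a b c, ∀ x ∈ U ×ˢ V,
      dd (εv c) (dd (εv b) (dd (εv a) Jh)) x = dd (εv c) (dd (εv a) (dd (εv b) Jh)) x := by
    intro a b c x hx
    exact dd_congr hsopen (fun y hy => dd_comm hsopen hJs hy (εv b) (εv a)) hx (εv c)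
  -- key differentiated identity at (z, 0)
  have hx₀ : ((z, (0 : Fin n → ℂ))) ∈ U ×ˢ V := hmemUV hz h0V
  have hKeyD : ∀ i j k l,
      dd (δv j) (dd (εv l) (dd (εv k) (dd (εv i) Jh))) (z, 0)
        - dd (δv i) (dd (εv l) (dd (εv k) (dd (εv j) Jh))) (z, 0)
      = ∑ p, ∑ q, η p q *
          (dd (εv k) (dd (εv p) (dd (εv i) Jh)) (z, 0)
              * dd (εv l) (dd (εv q) (dd (εv j) Jh)) (z, 0)
           + dd (εv l) (dd (εv p) (dd (εv i) Jh)) (z, 0)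
              * dd (εv k) (dd (εv q) (dd (εv j) Jh)) (z, 0)) := by
    intro i j k l
    -- first θ-derivative of the PDE
    have stepL : ∀ x ∈ U ×ˢ V,
        dd (εv k) (fun y => dd (δv j) (dd (εv i) Jh) y - dd (δv i) (dd (εv j) Jh) y) x
          = dd (δv j) (dd (εv k) (dd (εv i) Jh)) x - dd (δv i) (dd (εv k) (dd (εv j) Jh)) x := by
      intro x hx
      rw [dd_sub (dA (hG1δs j i) hx) (dA (hG1δs i j) hx)]
      rw [dd_comm hsopen (hG1s i) hx (εv k) (δv j), dd_comm hsopen (hG1s j) hx (εv k) (δv i)]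
    have stepR : ∀ x ∈ U ×ˢ V,
        dd (εv k) (fun y => ∑ p, ∑ q, η p q * dd (εv p) (dd (εv i) Jh) y
            * dd (εv q) (dd (εv j) Jh) y) x
          = ∑ p, ∑ q, (η p q * dd (εv p) (dd (εv i) Jh) x
                * dd (εv k) (dd (εv q) (dd (εv j) Jh)) x
              + dd (εv q) (dd (εv j) Jh) x
                * (η p q * dd (εv k) (dd (εv p) (dd (εv i) Jh)) x)) := by
      intro x hx
      rw [dd_sum (fun p _ => by
        exact DifferentiableAt.fun_sum (fun q _ =>
          (((dA (hG2s i p) hx).const_mul (η p q)).fun_mul (dA (hG2s j q) hx)))) (εv k)]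
      refine Finset.sum_congr rfl (fun p _ => ?_)
      rw [dd_sum (fun q _ =>
        (((dA (hG2s i p) hx).const_mul (η p q)).fun_mul (dA (hG2s j q) hx))) (εv k)]
      refine Finset.sum_congr rfl (fun q _ => ?_)
      rw [dd_mul (f := fun y => η p q * dd (εv p) (dd (εv i) Jh) y)
        (g := dd (εv q) (dd (εv j) Jh))
        ((dA (hG2s i p) hx).const_mul (η p q)) (dA (hG2s j q) hx) (εv k)]
      rw [dd_const_mul (dA (hG2s i p) hx) (η p q) (εv k)]
    -- equality of first derivatives as functions on U ×ˢ V
    have hABk : ∀ x ∈ U ×ˢ V,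
        dd (εv k) (fun y => dd (δv j) (dd (εv i) Jh) y - dd (δv i) (dd (εv j) Jh) y) x
          = dd (εv k) (fun y => ∑ p, ∑ q, η p q * dd (εv p) (dd (εv i) Jh) y
              * dd (εv q) (dd (εv j) Jh) y) x := by
      intro x hx
      exact dd_congr hsopen (fun y hy => by
        obtain ⟨hy1, hy2⟩ := Set.mem_prod.1 hy
        exact hKey0 i j y.1 hy1 y.2 hy2) hx (εv k)
    -- second θ-derivative, evaluated at (z,0)
    have hL2 : dd (εv l) (dd (εv k)
          (fun y => dd (δv j) (dd (εv i) Jh) y - dd (δv i) (dd (εv j) Jh) y)) (z, 0)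
        = dd (δv j) (dd (εv l) (dd (εv k) (dd (εv i) Jh))) (z, 0)
          - dd (δv i) (dd (εv l) (dd (εv k) (dd (εv j) Jh))) (z, 0) := by
      rw [dd_congr hsopen stepL hx₀ (εv l)]
      rw [dd_sub (dA (hG2δs j i k) hx₀) (dA (hG2δs i j k) hx₀) (εv l)]
      rw [dd_comm hsopen (hG2s i k) hx₀ (εv l) (δv j), dd_comm hsopen (hG2s j k) hx₀ (εv l) (δv i)]
    have hR2 : dd (εv l) (dd (εv k)
          (fun y => ∑ p, ∑ q, η p q * dd (εv p) (dd (εv i) Jh) y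
            * dd (εv q) (dd (εv j) Jh) y)) (z, 0)
        = ∑ p, ∑ q, η p q *
            (dd (εv k) (dd (εv p) (dd (εv i) Jh)) (z, 0)
                * dd (εv l) (dd (εv q) (dd (εv j) Jh)) (z, 0)
             + dd (εv l) (dd (εv p) (dd (εv i) Jh)) (z, 0)
                * dd (εv k) (dd (εv q) (dd (εv j) Jh)) (z, 0)) := by
      rw [dd_congr hsopen stepR hx₀ (εv l)]
      have hd1 : ∀ p q, DifferentiableAt ℂ (fun y => η p q * dd (εv p) (dd (εv i) Jh) y
          * dd (εv k) (dd (εv q) (dd (εv j) Jh)) y) ((z, 0) : (Fin n → ℂ) × (Fin n → ℂ)) :=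
        fun p q => ((dA (hG2s i p) hx₀).const_mul (η p q)).mul (dA (hG3s j q k) hx₀)
      have hd2 : ∀ p q, DifferentiableAt ℂ (fun y => dd (εv q) (dd (εv j) Jh) y
          * (η p q * dd (εv k) (dd (εv p) (dd (εv i) Jh)) y))
          ((z, 0) : (Fin n → ℂ) × (Fin n → ℂ)) :=
        fun p q => (dA (hG2s j q) hx₀).mul ((dA (hG3s i p k) hx₀).const_mul (η p q))
      rw [dd_sum (fun p _ => DifferentiableAt.fun_sum fun q _ => (hd1 p q).fun_add (hd2 p q)) (εv l)]
      refine Finset.sum_congr rfl fun p _ => ?_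
      rw [dd_sum (fun q _ => (hd1 p q).fun_add (hd2 p q)) (εv l)]
      refine Finset.sum_congr rfl fun q _ => ?_
      rw [dd_add (hd1 p q) (hd2 p q) (εv l)]
      rw [dd_mul (f := fun y => η p q * dd (εv p) (dd (εv i) Jh) y)
        (g := dd (εv k) (dd (εv q) (dd (εv j) Jh)))
        ((dA (hG2s i p) hx₀).const_mul (η p q)) (dA (hG3s j q k) hx₀) (εv l)]
      rw [dd_mul (f := dd (εv q) (dd (εv j) Jh))
        (g := fun y => η p q * dd (εv k) (dd (εv p) (dd (εv i) Jh)) y)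
        (dA (hG2s j q) hx₀) ((dA (hG3s i p k) hx₀).const_mul (η p q)) (εv l)]
      rw [dd_const_mul (dA (hG2s i p) hx₀) (η p q) (εv l),
          dd_const_mul (dA (hG3s i p k) hx₀) (η p q) (εv l)]
      rw [hvanish z hz i p, hvanish z hz j q]
      ring
    calc dd (δv j) (dd (εv l) (dd (εv k) (dd (εv i) Jh))) (z, 0)
          - dd (δv i) (dd (εv l) (dd (εv k) (dd (εv j) Jh))) (z, 0)
        = dd (εv l) (dd (εv k)
            (fun y => dd (δv j) (dd (εv i) Jh) y - dd (δv i) (dd (εv j) Jh) y)) (z, 0) :=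
          hL2.symm
      _ = dd (εv l) (dd (εv k)
            (fun y => ∑ p, ∑ q, η p q * dd (εv p) (dd (εv i) Jh) y
              * dd (εv q) (dd (εv j) Jh) y)) (z, 0) := dd_congr hsopen hABk hx₀ (εv l)
      _ = _ := hR2
  -- value of the Christoffel symbols in dd form
  have hΓval : ∀ m' a b, Γc m' a b z
      = -∑ l, η l m' * dd (εv l) (dd (εv b) (dd (εv a) Jh)) (z, 0) := by
    intro m' a b
    rw [hΓ m' a b z]
    congr 1
    exact Finset.sum_congr rfl fun l _ => by rw [hc3 z hz 0 h0V a b l]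
  refine ⟨fun i j k m => ?_, fun i j m => ?_⟩
  · -- flatness
    have hpdΓ : ∀ a b c, pd a (Γc m b c) z
        = -∑ l, η l m * dd (δv a) (dd (εv l) (dd (εv c) (dd (εv b) Jh))) (z, 0) := by
      intro a b c
      have hHs : ContDiffOn ℂ ∞
          (fun x : (Fin n → ℂ) × (Fin n → ℂ) =>
            -∑ l, η l m * dd (εv l) (dd (εv c) (dd (εv b) Jh)) x) (U ×ˢ V) :=
        (ContDiffOn.sum fun l _ => contDiffOn_const.mul (hG3s b c l)).neg
      have he : ∀ y ∈ U, Γc m b c y = (fun z'' =>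
          (fun x : (Fin n → ℂ) × (Fin n → ℂ) =>
            -∑ l, η l m * dd (εv l) (dd (εv c) (dd (εv b) Jh)) x) (z'', 0)) y := by
        intro y hy
        rw [hΓ m b c y]
        congr 1
        exact Finset.sum_congr rfl fun l _ => by rw [hc3 y hy 0 h0V b c l]
      rw [pd_congr hU he hz a]
      rw [pd_eq_dd_fst (dA hHs hx₀) a]
      rw [dd_neg (fun y => ∑ l, η l m * dd (εv l) (dd (εv c) (dd (εv b) Jh)) y) _ (δv a)]
      rw [dd_sum (fun l _ => (dA (hG3s b c l) hx₀).const_mul (η l m)) (δv a)]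
      congr 1
      exact Finset.sum_congr rfl fun l _ => by
        rw [dd_const_mul (dA (hG3s b c l) hx₀) (η l m) (δv a)]
    have e1 : pd i (Γc m j k) z - pd j (Γc m i k) z
        = ∑ l, η l m * (∑ p, ∑ q, η p q *
            (dd (εv k) (dd (εv p) (dd (εv i) Jh)) (z, 0)
                * dd (εv l) (dd (εv q) (dd (εv j) Jh)) (z, 0)
             + dd (εv l) (dd (εv p) (dd (εv i) Jh)) (z, 0)
                * dd (εv k) (dd (εv q) (dd (εv j) Jh)) (z, 0))) := by
      rw [hpdΓ i j k, hpdΓ j i k, neg_sub_neg, ← Finset.sum_sub_distrib]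
      exact Finset.sum_congr rfl fun l _ => by rw [← mul_sub, hKeyD i j k l]
    have e2 : ∑ q, (Γc m i q z * Γc q j k z - Γc m j q z * Γc q i k z)
        = ∑ q, ((∑ l, η l m * dd (εv l) (dd (εv q) (dd (εv i) Jh)) (z, 0))
              * (∑ p, η p q * dd (εv p) (dd (εv k) (dd (εv j) Jh)) (z, 0))
            - (∑ l, η l m * dd (εv l) (dd (εv q) (dd (εv j) Jh)) (z, 0))
              * (∑ p, η p q * dd (εv p) (dd (εv k) (dd (εv i) Jh)) (z, 0))) := by
      refine Finset.sum_congr rfl fun q _ => ?_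
      rw [hΓval m i q, hΓval q j k, hΓval m j q, hΓval q i k, neg_mul_neg, neg_mul_neg]
    rw [e1, e2]
    exact alg_lemma η hη
      (fun a b c => dd (εv c) (dd (εv b) (dd (εv a) Jh)) (z, 0))
      (fun a b c => hWsym1 a b c (z, 0) hx₀) i j k m
  · -- torsion-free
    rw [hΓ m i j z, hΓ m j i z]
    congr 1
    refine Finset.sum_congr rfl fun l _ => ?_
    rw [hc3 z hz 0 h0V i j l, hc3 z hz 0 h0V j i l, hWsym2 i j l (z, 0) hx₀]
end

section
/- Let J : U × V → ℂ be holomorphic with U ⊆ (ℂ*)ⁿ open, homogeneous of degree -1 in z (i.e. J(λz,θ) = λ^{-1}J(z,θ) for λ near 1), and satisfying the Joyce PDE ∂²J/∂θ_i∂z_j - ∂²J/∂θ_j∂z_i = ∑_{p,q} η_{pq}(∂²J/∂θ_i∂θ_p)(∂²J/∂θ_j∂θ_q) for a constant antisymmetric matrix η. Define H(z,θ) = ∑_i z_i·∂J/∂θ_i. Then for all i: ∂H/∂z_i = -∑_{p,q} η_{pq}·(∂²J/∂θ_i∂θ_p)·(∂H/∂θ_q). -/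
open Filter

private lemma pd_hasDerivAt_update {n : ℕ} (x : Fin n → ℂ) (i : Fin n) (t : ℂ) :
    HasDerivAt (fun s => Function.update x i s) (Pi.single i 1) t := by
  have h : (fun s : ℂ => Function.update x i s)
      = fun s => x + (s - x i) • (Pi.single i 1 : Fin n → ℂ) := by
    funext s; ext j
    rcases eq_or_ne j i with rfl | hj
    · simp
    · simp [Function.update_of_ne hj, Pi.single_apply, hj]
  rw [h]
  simpa using (((hasDerivAt_id t).sub_const (x i)).smul_const (Pi.single i (1:ℂ))).const_add x

private lemma pd_eq_fderiv {n : ℕ} (i : Fin n) {g : (Fin n → ℂ) → ℂ} {x : Fin n → ℂ}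
    (hg : DifferentiableAt ℂ g x) :
    pd i g x = fderiv ℂ g x (Pi.single i 1) := by
  have hx : Function.update x i (x i) = x := Function.update_eq_self i x
  have h2 : HasFDerivAt g (fderiv ℂ g x) (Function.update x i (x i)) := by
    rw [hx]; exact hg.hasFDerivAt
  exact (h2.comp_hasDerivAt (x i) (pd_hasDerivAt_update x i (x i))).deriv

private lemma pd_congr_s19 {n : ℕ} (i : Fin n) {g g' : (Fin n → ℂ) → ℂ} {x : Fin n → ℂ}
    (h : g =ᶠ[nhds x] g') : pd i g x = pd i g' x := by
  show deriv (fun t => g (Function.update x i t)) (x i)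
      = deriv (fun t => g' (Function.update x i t)) (x i)
  apply Filter.EventuallyEq.deriv_eq
  have hc : Filter.Tendsto (fun s : ℂ => Function.update x i s) (nhds (x i)) (nhds x) := by
    have := (pd_hasDerivAt_update x i (x i)).continuousAt
    rwa [ContinuousAt, Function.update_eq_self] at this
  exact h.comp_tendsto hc

private lemma pd_snd_s19 {n : ℕ} {F : (Fin n → ℂ) × (Fin n → ℂ) → ℂ} {z θ : Fin n → ℂ}
    (hF : DifferentiableAt ℂ F (z, θ)) (j : Fin n) :
    pd j (fun θ' => F (z, θ')) θ = fderiv ℂ F (z, θ) (0, Pi.single j 1) := by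
  have h0 := hF.hasFDerivAt.comp θ (hasFDerivAt_prodMk_right (𝕜 := ℂ) z θ)
  have h1 : HasFDerivAt (fun θ' => F (z, θ'))
      ((fderiv ℂ F (z, θ)).comp (ContinuousLinearMap.inr ℂ (Fin n → ℂ) (Fin n → ℂ))) θ := h0
  rw [pd_eq_fderiv j h1.differentiableAt, h1.fderiv]
  simp

private lemma pd_fst_s19 {n : ℕ} {F : (Fin n → ℂ) × (Fin n → ℂ) → ℂ} {z θ : Fin n → ℂ}
    (hF : DifferentiableAt ℂ F (z, θ)) (j : Fin n) :
    pd j (fun z' => F (z', θ)) z = fderiv ℂ F (z, θ) (Pi.single j 1, 0) := by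
  have h0 := hF.hasFDerivAt.comp z (hasFDerivAt_prodMk_left (𝕜 := ℂ) z θ)
  have h1 : HasFDerivAt (fun z' => F (z', θ))
      ((fderiv ℂ F (z, θ)).comp (ContinuousLinearMap.inl ℂ (Fin n → ℂ) (Fin n → ℂ))) z := h0
  rw [pd_eq_fderiv j h1.differentiableAt, h1.fderiv]
  simp

private lemma fderiv_apply_const {E₁ : Type*} [NormedAddCommGroup E₁] [NormedSpace ℂ E₁]
    {G : E₁ → E₁ →L[ℂ] ℂ} {x : E₁} (hG : DifferentiableAt ℂ G x) (v w : E₁) :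
    fderiv ℂ (fun y => G y v) x w = fderiv ℂ G x w v := by
  have h0 := ((ContinuousLinearMap.apply ℂ ℂ v).hasFDerivAt (x := G x)).comp x hG.hasFDerivAt
  have h : HasFDerivAt (fun y => G y v)
      (((ContinuousLinearMap.apply ℂ ℂ) v).comp (fderiv ℂ G x)) x := h0
  rw [h.fderiv]
  simp

private lemma fderiv_coord_mul {n : ℕ} {G : ((Fin n → ℂ) × (Fin n → ℂ)) → ℂ}
    {x : (Fin n → ℂ) × (Fin n → ℂ)} (hG : DifferentiableAt ℂ G x) (j : Fin n)
    (w : (Fin n → ℂ) × (Fin n → ℂ)) :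
    fderiv ℂ (fun y => y.1 j * G y) x w = x.1 j * fderiv ℂ G x w + G x * w.1 j := by
  have hL : HasFDerivAt (fun y : (Fin n → ℂ) × (Fin n → ℂ) => y.1 j)
      ((ContinuousLinearMap.proj j).comp (ContinuousLinearMap.fst ℂ _ _)) x :=
    ((ContinuousLinearMap.proj j).comp (ContinuousLinearMap.fst ℂ (Fin n → ℂ) (Fin n → ℂ))).hasFDerivAt (x := x)
  have h : HasFDerivAt (fun y => y.1 j * G y) _ x := hL.mul hG.hasFDerivAt
  rw [h.fderiv]
  simp

private lemma sum_swap_aux {n : ℕ} (z : Fin n → ℂ) (η : Fin n → Fin n → ℂ)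
    (B : Fin n → ℂ) (C : Fin n → Fin n → ℂ) :
    ∑ j, z j * ∑ p, ∑ q, η p q * B p * C q j
      = ∑ p, ∑ q, η p q * B p * ∑ j, z j * C q j := by
  have h1 : ∀ p q, η p q * B p * ∑ j, z j * C q j = ∑ j, z j * (η p q * B p * C q j) := by
    intro p q
    rw [Finset.mul_sum]
    exact Finset.sum_congr rfl fun j _ => by ring
  simp only [h1]
  simp only [Finset.mul_sum]
  refine Finset.sum_comm.trans (Finset.sum_congr rfl fun p _ => Finset.sum_comm)

/-- If `J` is homogeneous of degree `-1` in `z` (for `λ` near `1`) and satisfies the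
Joyce PDE, then `H(z,θ) = ∑_i z_i ∂J/∂θ_i` satisfies
`∂H/∂z_i = -∑_{p,q} η_{pq} (∂²J/∂θ_i∂θ_p)(∂H/∂θ_q)`. -/
theorem joyce_H_identity {n : ℕ} (η : Fin n → Fin n → ℂ)
    (hη : ∀ i j, η i j = -η j i)
    (U : Set ((Fin n → ℂ) × (Fin n → ℂ))) (hU : IsOpen U)
    (hUz : ∀ z θ, (z, θ) ∈ U → ∀ i, z i ≠ 0)
    (J : (Fin n → ℂ) → (Fin n → ℂ) → ℂ)
    (hsmooth : ContDiffOn ℂ ⊤ (fun p => J p.1 p.2) U)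
    (hhom : ∀ z θ, (z, θ) ∈ U →
      ∀ᶠ lam in nhds (1 : ℂ), J (lam • z) θ = lam⁻¹ * J z θ)
    (hPDE : ∀ z θ, (z, θ) ∈ U → ∀ i j,
      pd j (fun z' => pd i (J z') θ) z - pd i (fun z' => pd j (J z') θ) z =
        ∑ p, ∑ q, η p q * pd p (pd i (J z)) θ * pd q (pd j (J z)) θ)
    (H : (Fin n → ℂ) → (Fin n → ℂ) → ℂ)
    (hH : ∀ z θ, H z θ = ∑ i, z i * pd i (J z) θ) :
    ∀ z θ, (z, θ) ∈ U → ∀ i,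
      pd i (fun z' => H z' θ) z =
        -∑ p, ∑ q, η p q * pd p (pd i (J z)) θ * pd q (H z) θ := by
  classical
  intro z θ hx i
  set F : (Fin n → ℂ) × (Fin n → ℂ) → ℂ := fun p => J p.1 p.2 with hFdef
  -- smoothness
  have hFU : ContDiffOn ℂ ⊤ F U := hsmooth
  have hF'U : ContDiffOn ℂ ⊤ (fderiv ℂ F) U := hFU.fderiv_of_isOpen hU le_top
  have hFd : ∀ y ∈ U, DifferentiableAt ℂ F y := fun y hy =>
    (hFU.contDiffAt (hU.mem_nhds hy)).differentiableAt (by simp)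
  have hF'd : ∀ y ∈ U, DifferentiableAt ℂ (fderiv ℂ F) y := fun y hy =>
    (hF'U.contDiffAt (hU.mem_nhds hy)).differentiableAt (by simp)
  have hsymm : ∀ v w, fderiv ℂ (fderiv ℂ F) (z, θ) v w = fderiv ℂ (fderiv ℂ F) (z, θ) w v :=
    (hFU.contDiffAt (hU.mem_nhds hx)).isSymmSndFDerivAt le_top
  -- slices
  have hslT : ∀ᶠ θ' in nhds θ, (z, θ') ∈ U := by
    have hc : ContinuousAt (fun θ' : Fin n → ℂ => ((z, θ') : (Fin n → ℂ) × (Fin n → ℂ))) θ :=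
      (continuous_const.prodMk continuous_id).continuousAt
    exact hc.preimage_mem_nhds (hU.mem_nhds hx)
  have hslZ : ∀ᶠ z' in nhds z, (z', θ) ∈ U := by
    have hc : ContinuousAt (fun z' : Fin n → ℂ => ((z', θ) : (Fin n → ℂ) × (Fin n → ℂ))) z :=
      (continuous_id.prodMk continuous_const).continuousAt
    exact hc.preimage_mem_nhds (hU.mem_nhds hx)
  -- pointwise first-order reduction
  have paT : ∀ z₀ θ₀, (z₀, θ₀) ∈ U → ∀ j,
      pd j (J z₀) θ₀ = fderiv ℂ F (z₀, θ₀) (0, Pi.single j 1) :=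
    fun z₀ θ₀ h j => pd_snd_s19 (hFd _ h) j
  -- second-order θθ
  have hdGv : ∀ v : (Fin n → ℂ) × (Fin n → ℂ),
      DifferentiableAt ℂ (fun y => fderiv ℂ F y v) (z, θ) :=
    fun v => (hF'd _ hx).clm_apply (differentiableAt_const _)
  have paTT : ∀ p k, pd p (pd k (J z)) θ
      = fderiv ℂ (fderiv ℂ F) (z, θ) (0, Pi.single p 1) (0, Pi.single k 1) := by
    intro p k
    have h1 : pd k (J z) =ᶠ[nhds θ]
        fun θ' => fderiv ℂ F (z, θ') (0, Pi.single k 1) := by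
      filter_upwards [hslT] with θ' h using paT z θ' h k
    rw [pd_congr_s19 p h1, pd_snd_s19 (hdGv _) p, fderiv_apply_const (hF'd _ hx)]
  -- mixed z then θ
  have paZT : ∀ j k, pd j (fun z' => pd k (J z') θ) z
      = fderiv ℂ (fderiv ℂ F) (z, θ) (Pi.single j 1, 0) (0, Pi.single k 1) := by
    intro j k
    have h1 : (fun z' => pd k (J z') θ) =ᶠ[nhds z]
        fun z' => fderiv ℂ F (z', θ) (0, Pi.single k 1) := by
      filter_upwards [hslZ] with z' h using paT z' θ h k
    rw [pd_congr_s19 j h1, pd_fst_s19 (hdGv _) j, fderiv_apply_const (hF'd _ hx)]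
  -- Euler identity
  have hEuler : ∀ z₀ θ₀, (z₀, θ₀) ∈ U → fderiv ℂ F (z₀, θ₀) (z₀, 0) = -F (z₀, θ₀) := by
    intro z₀ θ₀ h
    have hc : HasDerivAt (fun lam : ℂ => ((lam • z₀, θ₀) : (Fin n → ℂ) × (Fin n → ℂ)))
        ((z₀, (0 : Fin n → ℂ))) 1 := by
      have h1 : HasDerivAt (fun lam : ℂ => lam • z₀) z₀ 1 := by
        simpa using (hasDerivAt_id (1 : ℂ)).smul_const z₀
      exact h1.prodMk (hasDerivAt_const 1 θ₀)
    have h2 : HasDerivAt (fun lam : ℂ => F (lam • z₀, θ₀))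
        (fderiv ℂ F (z₀, θ₀) (z₀, 0)) 1 := by
      have hpt : (((1 : ℂ) • z₀, θ₀) : (Fin n → ℂ) × (Fin n → ℂ)) = (z₀, θ₀) := by simp
      have hD : HasFDerivAt F (fderiv ℂ F (z₀, θ₀)) ((1 : ℂ) • z₀, θ₀) := by
        rw [hpt]; exact (hFd _ h).hasFDerivAt
      exact hD.comp_hasDerivAt 1 hc
    have h3 : HasDerivAt (fun lam : ℂ => lam⁻¹ * F (z₀, θ₀)) (-F (z₀, θ₀)) 1 := by
      simpa using (hasDerivAt_inv one_ne_zero).mul_const (F (z₀, θ₀))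
    have h4 : (fun lam : ℂ => F (lam • z₀, θ₀)) =ᶠ[nhds 1]
        fun lam => lam⁻¹ * F (z₀, θ₀) := hhom z₀ θ₀ h
    exact ((h3.congr_of_eventuallyEq h4).unique h2).symm
  -- expansion of (z,0)
  have hzsum : (((z, (0 : Fin n → ℂ))) : (Fin n → ℂ) × (Fin n → ℂ))
      = ∑ j, z j • ((Pi.single j 1, 0) : (Fin n → ℂ) × (Fin n → ℂ)) := by
    have h1 : (z : Fin n → ℂ) = ∑ j, z j • (Pi.single j 1 : Fin n → ℂ) := by
      funext k
      simp [Finset.sum_apply, Pi.single_apply]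
    refine Prod.ext ?_ ?_
    · rw [Prod.fst_sum]; simpa using h1
    · rw [Prod.snd_sum]; simp
  -- differentiated Euler
  have hdE : ∀ k, ∑ j, z j * fderiv ℂ (fderiv ℂ F) (z, θ) (0, Pi.single k 1) (Pi.single j 1, 0)
      = -fderiv ℂ F (z, θ) (0, Pi.single k 1) := by
    intro k
    have h1 : (fun θ' => fderiv ℂ F (z, θ') ((z, (0 : Fin n → ℂ))))
        =ᶠ[nhds θ] fun θ' => -F (z, θ') := by
      filter_upwards [hslT] with θ' h using hEuler z θ' h
    have hL : pd k (fun θ' => fderiv ℂ F (z, θ') ((z, (0 : Fin n → ℂ)))) θ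
        = fderiv ℂ (fderiv ℂ F) (z, θ) (0, Pi.single k 1) (z, 0) := by
      rw [pd_snd_s19 (hdGv _) k, fderiv_apply_const (hF'd _ hx)]
    have hR : pd k (fun θ' => -F (z, θ')) θ = -fderiv ℂ F (z, θ) (0, Pi.single k 1) := by
      rw [pd_snd_s19 (F := fun y => -F y) (hFd _ hx).neg k, fderiv_fun_neg]
      simp
    have h2 : fderiv ℂ (fderiv ℂ F) (z, θ) (0, Pi.single k 1) (z, 0)
        = -fderiv ℂ F (z, θ) (0, Pi.single k 1) := by
      rw [← hL, pd_congr_s19 k h1, hR]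
    rw [← h2, hzsum, map_sum]
    simp only [map_smul, smul_eq_mul]
  -- pd of H in θ directions
  have hdiffj : ∀ v : (Fin n → ℂ) × (Fin n → ℂ), ∀ c : ℂ,
      DifferentiableAt ℂ (fun y => c * fderiv ℂ F y v) (z, θ) :=
    fun v c => (hdGv v).const_mul c
  have paH : ∀ q, pd q (H z) θ
      = ∑ j, z j * fderiv ℂ (fderiv ℂ F) (z, θ) (0, Pi.single q 1) (0, Pi.single j 1) := by
    intro q
    have h1 : H z =ᶠ[nhds θ]
        fun θ' => ∑ j, z j * fderiv ℂ F (z, θ') (0, Pi.single j 1) := by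
      filter_upwards [hslT] with θ' h
      rw [hH]
      exact Finset.sum_congr rfl fun j _ => by rw [paT z θ' h j]
    have hdG : DifferentiableAt ℂ
        (fun y => ∑ j, z j * fderiv ℂ F y (0, Pi.single j 1)) (z, θ) :=
      DifferentiableAt.fun_sum fun j _ => hdiffj _ (z j)
    rw [pd_congr_s19 q h1, pd_snd_s19 hdG q,
      fderiv_fun_sum (fun j _ => hdiffj (0, Pi.single j 1) (z j))]
    simp only [ContinuousLinearMap.coe_sum', Finset.sum_apply]
    refine Finset.sum_congr rfl fun j _ => ?_
    rw [fderiv_const_mul (hdGv _) (z j)]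
    simp only [ContinuousLinearMap.coe_smul', Pi.smul_apply, smul_eq_mul]
    rw [fderiv_apply_const (hF'd _ hx)]
  -- LHS expansion
  have paLHS : pd i (fun z' => H z' θ) z
      = fderiv ℂ F (z, θ) (0, Pi.single i 1)
        + ∑ j, z j * fderiv ℂ (fderiv ℂ F) (z, θ) (Pi.single i 1, 0) (0, Pi.single j 1) := by
    have h1 : (fun z' => H z' θ) =ᶠ[nhds z]
        fun z' => ∑ j, z' j * fderiv ℂ F (z', θ) (0, Pi.single j 1) := by
      filter_upwards [hslZ] with z' h
      rw [hH]
      exact Finset.sum_congr rfl fun j _ => by rw [paT z' θ h j]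
    have hdterm : ∀ j : Fin n, DifferentiableAt ℂ
        (fun y : (Fin n → ℂ) × (Fin n → ℂ) => y.1 j * fderiv ℂ F y (0, Pi.single j 1)) (z, θ) := by
      intro j
      have hcoord : DifferentiableAt ℂ
          (fun y : (Fin n → ℂ) × (Fin n → ℂ) => y.1 j) (z, θ) :=
        ((ContinuousLinearMap.proj j).comp
          (ContinuousLinearMap.fst ℂ (Fin n → ℂ) (Fin n → ℂ))).differentiableAt
      exact hcoord.mul (hdGv _)
    have hdG : DifferentiableAt ℂ
        (fun y : (Fin n → ℂ) × (Fin n → ℂ) =>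
          ∑ j, y.1 j * fderiv ℂ F y (0, Pi.single j 1)) (z, θ) :=
      DifferentiableAt.fun_sum fun j _ => hdterm j
    rw [pd_congr_s19 i h1]
    have h2 := pd_fst_s19 (F := fun y => ∑ j, y.1 j * fderiv ℂ F y (0, Pi.single j 1)) hdG i
    rw [h2, fderiv_fun_sum (fun j _ => hdterm j)]
    simp only [ContinuousLinearMap.coe_sum', Finset.sum_apply]
    have h3 : ∀ j : Fin n,
        fderiv ℂ (fun y : (Fin n → ℂ) × (Fin n → ℂ) =>
          y.1 j * fderiv ℂ F y (0, Pi.single j 1)) (z, θ) (Pi.single i 1, 0)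
        = z j * fderiv ℂ (fderiv ℂ F) (z, θ) (Pi.single i 1, 0) (0, Pi.single j 1)
          + fderiv ℂ F (z, θ) (0, Pi.single j 1) * (Pi.single i 1 : Fin n → ℂ) j := by
      intro j
      rw [fderiv_coord_mul (hdGv _) j, fderiv_apply_const (hF'd _ hx)]
    rw [Finset.sum_congr rfl fun j _ => h3 j, Finset.sum_add_distrib]
    rw [add_comm, Finset.sum_congr rfl
      (fun j _ => by rw [Pi.single_apply] : ∀ j ∈ Finset.univ,
        fderiv ℂ F (z, θ) (0, Pi.single j 1) * (Pi.single i 1 : Fin n → ℂ) j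
        = fderiv ℂ F (z, θ) (0, Pi.single j 1) * if j = i then 1 else 0)]
    simp [Finset.sum_ite_eq']
  -- assemble
  rw [paLHS]
  simp only [paTT, paH]
  have hPDE' : ∀ j, fderiv ℂ (fderiv ℂ F) (z, θ) (Pi.single i 1, 0) (0, Pi.single j 1)
      = fderiv ℂ (fderiv ℂ F) (z, θ) (0, Pi.single i 1) (Pi.single j 1, 0)
        - ∑ p, ∑ q, η p q * fderiv ℂ (fderiv ℂ F) (z, θ) (0, Pi.single p 1) (0, Pi.single i 1)
            * fderiv ℂ (fderiv ℂ F) (z, θ) (0, Pi.single q 1) (0, Pi.single j 1) := by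
    intro j
    have h := hPDE z θ hx i j
    rw [paZT j i, paZT i j] at h
    simp only [paTT] at h
    have hs := hsymm (Pi.single j 1, 0) (0, Pi.single i 1)
    linear_combination hs - h
  rw [Finset.sum_congr rfl fun j _ => by rw [hPDE' j]]
  have hexp : ∀ j : Fin n, z j * (fderiv ℂ (fderiv ℂ F) (z, θ) (0, Pi.single i 1) (Pi.single j 1, 0)
      - ∑ p, ∑ q, η p q * fderiv ℂ (fderiv ℂ F) (z, θ) (0, Pi.single p 1) (0, Pi.single i 1)
          * fderiv ℂ (fderiv ℂ F) (z, θ) (0, Pi.single q 1) (0, Pi.single j 1))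
      = z j * fderiv ℂ (fderiv ℂ F) (z, θ) (0, Pi.single i 1) (Pi.single j 1, 0)
        - z j * ∑ p, ∑ q, η p q * fderiv ℂ (fderiv ℂ F) (z, θ) (0, Pi.single p 1) (0, Pi.single i 1)
            * fderiv ℂ (fderiv ℂ F) (z, θ) (0, Pi.single q 1) (0, Pi.single j 1) :=
    fun j => by ring
  rw [Finset.sum_congr rfl fun j _ => hexp j, Finset.sum_sub_distrib, hdE i]
  have haux := sum_swap_aux z η
    (fun p => fderiv ℂ (fderiv ℂ F) (z, θ) (0, Pi.single p 1) (0, Pi.single i 1))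
    (fun q j => fderiv ℂ (fderiv ℂ F) (z, θ) (0, Pi.single q 1) (0, Pi.single j 1))
  linear_combination -haux
end
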